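/- arXiv:1809.07191 — 8 statements merged into one kernel-verified Lean document; each statement's English description precedes it below -/
import Mathlib

section
/- Let G be a nontrivial subgroup of the additive group of the rationals. Then the endomorphism ring of G (the ring of additive endomorphisms of G) is ring-isomorphic to the subring ℤ[1/p : p ∈ M] of ℚ, where M is the set of primes p such that every element of G is divisible within G by every power of p (i.e., for all g ∈ G and all n, there exists h ∈ G with pⁿ·h = g). -/
def zLoc (P : Set ℕ) : Subring ℚ :=
  Subring.closure {x : ℚ | ∃ p ∈ P, x = (p : ℚ)⁻¹}

def mulRing (G : AddSubgroup ℚ) : Subring ℚ where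
  carrier := {q : ℚ | ∀ g ∈ G, q * g ∈ G}
  zero_mem' := by intro g hg; simpa using G.zero_mem
  one_mem' := by intro g hg; simpa using hg
  add_mem' := by intro a b ha hb g hg; rw [add_mul]; exact G.add_mem (ha g hg) (hb g hg)
  neg_mem' := by intro a ha g hg; rw [neg_mul]; exact G.neg_mem (ha g hg)
  mul_mem' := by intro a b ha hb g hg; rw [mul_assoc]; exact ha _ (hb g hg)

def mulEnd (G : AddSubgroup ℚ) : mulRing G →+* AddMonoid.End G where
  toFun q := AddMonoidHom.mk' (fun x => ⟨(q : ℚ) * x, q.2 x x.2⟩)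
    (fun a b => by ext; push_cast; ring)
  map_one' := by refine AddMonoidHom.ext fun x => Subtype.ext ?_
                 show (1 : ℚ) * x = (x : ℚ); rw [one_mul]
  map_mul' q r := by refine AddMonoidHom.ext fun x => Subtype.ext ?_
                     show ((q : ℚ) * r) * x = (q : ℚ) * ((r : ℚ) * x); rw [mul_assoc]
  map_zero' := by refine AddMonoidHom.ext fun x => Subtype.ext ?_
                  show (0 : ℚ) * x = (0 : ℚ); rw [zero_mul]
  map_add' q r := by refine AddMonoidHom.ext fun x => Subtype.ext ?_
                     show ((q : ℚ) + r) * x = (q : ℚ) * x + (r : ℚ) * x; rw [add_mul]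

lemma den_mul_self (q : ℚ) : (q.den : ℚ) * q = (q.num : ℚ) := by
  have h : (q.den : ℚ) ≠ 0 := by exact_mod_cast q.den_nz
  rw [mul_comm]
  exact ((div_eq_iff h).mp (Rat.num_div_den q)).symm

lemma mulEnd_bij (G : AddSubgroup ℚ) (hG : G ≠ ⊥) : Function.Bijective (mulEnd G) := by
  obtain ⟨⟨g₀, hg₀G⟩, hg₀'⟩ := AddSubgroup.ne_bot_iff_exists_ne_zero.mp hG
  have hg₀ : g₀ ≠ 0 := fun h => hg₀' (Subtype.ext h)
  constructor
  · intro q r h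
    apply Subtype.ext
    have := congrArg (fun φ : AddMonoid.End G => ((φ ⟨g₀, hg₀G⟩ : G) : ℚ)) h
    simp only [mulEnd, AddMonoidHom.mk'_apply] at this
    exact mul_right_cancel₀ hg₀ this
  · intro φ
    -- key: g₀ * φ x = φ g₀ * x for all x
    have key : ∀ x : G, g₀ * ((φ x : G) : ℚ) = ((φ ⟨g₀, hg₀G⟩ : G) : ℚ) * (x : ℚ) := by
      intro x
      set g : ℚ := (x : ℚ) with hgdef
      set m : ℤ := g.num * g₀.den with hm
      set n : ℤ := g.den * g₀.num with hn
      have hn0 : (n : ℚ) ≠ 0 := by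
        have : n ≠ 0 := by
          simp only [hn]
          exact mul_ne_zero (by exact_mod_cast g.den_nz) (Rat.num_ne_zero.mpr hg₀)
        exact_mod_cast this
      have hsmul : n • x = m • (⟨g₀, hg₀G⟩ : G) := by
        apply Subtype.ext
        push_cast
        simp only [zsmul_eq_mul]
        show (n : ℚ) * g = (m : ℚ) * g₀
        simp only [hm, hn]
        push_cast
        have h1 : (g.den : ℚ) * g = (g.num : ℚ) := den_mul_self g
        have h2 : (g₀.den : ℚ) * g₀ = (g₀.num : ℚ) := den_mul_self g₀
        calc (g.den : ℚ) * g₀.num * g = (g₀.num : ℚ) * ((g.den : ℚ) * g) := by ring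
          _ = (g₀.num : ℚ) * g.num := by rw [h1]
          _ = (g.num : ℚ) * ((g₀.den : ℚ) * g₀) := by rw [h2]; ring
          _ = (g.num : ℚ) * g₀.den * g₀ := by ring
      have hφ : n • (φ x) = m • (φ ⟨g₀, hg₀G⟩) := by
        rw [← map_zsmul, ← map_zsmul, hsmul]
      have hφ' : (n : ℚ) * ((φ x : G) : ℚ) = (m : ℚ) * ((φ ⟨g₀, hg₀G⟩ : G) : ℚ) := by
        have := congrArg (fun y : G => (y : ℚ)) hφ
        push_cast at this
        simp only [zsmul_eq_mul] at this
        exact this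
      have hng : (n : ℚ) * g = (m : ℚ) * g₀ := by
        have := congrArg (fun y : G => (y : ℚ)) hsmul
        push_cast at this
        simp only [zsmul_eq_mul] at this
        exact this
      apply mul_left_cancel₀ hn0
      calc (n : ℚ) * (g₀ * ((φ x : G) : ℚ)) = g₀ * ((n : ℚ) * ((φ x : G) : ℚ)) := by ring
        _ = g₀ * ((m : ℚ) * ((φ ⟨g₀, hg₀G⟩ : G) : ℚ)) := by rw [hφ']
        _ = ((m : ℚ) * g₀) * ((φ ⟨g₀, hg₀G⟩ : G) : ℚ) := by ring
        _ = ((n : ℚ) * g) * ((φ ⟨g₀, hg₀G⟩ : G) : ℚ) := by rw [hng]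
        _ = (n : ℚ) * (((φ ⟨g₀, hg₀G⟩ : G) : ℚ) * g) := by ring
    set q : ℚ := ((φ ⟨g₀, hg₀G⟩ : G) : ℚ) / g₀ with hq
    have hqx : ∀ x : G, ((φ x : G) : ℚ) = q * x := by
      intro x
      rw [hq, div_mul_eq_mul_div, ← key x, mul_comm, mul_div_assoc, div_self hg₀, mul_one]
    have hqmem : q ∈ mulRing G := by
      intro g hg
      rw [← hqx ⟨g, hg⟩]
      exact (φ ⟨g, hg⟩).2
    refine ⟨⟨q, hqmem⟩, ?_⟩
    refine AddMonoidHom.ext fun x => Subtype.ext ?_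
    show q * x = ((φ x : G) : ℚ)
    rw [hqx x]

lemma inv_nat_mem (S : Subring ℚ) : ∀ b : ℕ, b ≠ 0 →
    (∀ p : ℕ, p.Prime → p ∣ b → ((p : ℚ))⁻¹ ∈ S) → ((b : ℚ))⁻¹ ∈ S := by
  intro b
  induction b using Nat.strong_induction_on with
  | _ b ih =>
    intro hb hp
    rcases eq_or_ne b 1 with rfl | h1
    · simpa using S.one_mem
    · have hpf := Nat.minFac_prime h1
      obtain ⟨c, hc⟩ := Nat.minFac_dvd b
      have hc0 : c ≠ 0 := by rintro rfl; rw [mul_zero] at hc; exact hb hc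
      have hclt : c < b := by
        rw [hc]
        calc c = 1 * c := (one_mul c).symm
          _ < b.minFac * c := (Nat.mul_lt_mul_right (Nat.pos_of_ne_zero hc0)).mpr hpf.one_lt
      have heq : ((b : ℚ))⁻¹ = ((b.minFac : ℚ))⁻¹ * ((c : ℚ))⁻¹ := by
        conv_lhs => rw [hc]
        push_cast
        rw [mul_inv]
      rw [heq]
      exact S.mul_mem (hp _ hpf (Nat.minFac_dvd b))
        (ih c hclt hc0 fun p pp pd => hp p pp (pd.trans (Dvd.intro_left b.minFac hc.symm)))

/-- The endomorphism ring of a nontrivial subgroup `G` of `ℚ` is isomorphic to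
`ℤ[1/p : p ∈ M]`, where `M` is the set of primes `p` such that every element of `G`
is divisible in `G` by every power of `p`. -/
theorem endRing_iso_zLoc (G : AddSubgroup ℚ) (hG : G ≠ ⊥) :
    Nonempty (AddMonoid.End G ≃+*
      zLoc {p : ℕ | p.Prime ∧ ∀ g ∈ G, ∀ n : ℕ, ∃ h ∈ G, (p : ℚ) ^ n * h = g}) := by
  set M := {p : ℕ | p.Prime ∧ ∀ g ∈ G, ∀ n : ℕ, ∃ h ∈ G, (p : ℚ) ^ n * h = g} with hM
  have hsub : mulRing G = zLoc M := by
    apply le_antisymm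
    · intro q hq
      have hq' : ∀ g ∈ G, q * g ∈ G := hq
      have hden0 : ((q.den : ℚ)) ≠ 0 := by exact_mod_cast q.den_nz
      -- step 1 : dividing by den stays in G
      have hcop : Int.gcd q.num (q.den : ℤ) = 1 := by
        simpa [Int.gcd, Int.natAbs_natCast] using q.reduced
      obtain ⟨u, v, huv⟩ := Int.isCoprime_iff_gcd_eq_one.mpr hcop
      have hd : ∀ g ∈ G, ((q.den : ℚ))⁻¹ * g ∈ G := by
        intro g hg
        have h1 : (u : ℚ) * (q * g) + (v : ℚ) * g ∈ G :=
          G.add_mem (by simpa [zsmul_eq_mul] using G.zsmul_mem (hq' g hg) u)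
            (by simpa [zsmul_eq_mul] using G.zsmul_mem hg v)
        have hnum : (u : ℚ) * q.num + (v : ℚ) * q.den = 1 := by exact_mod_cast huv
        have hqd : q * (q.den : ℚ) = (q.num : ℚ) := by rw [mul_comm]; exact den_mul_self q
        have h2 : (u : ℚ) * (q * g) + (v : ℚ) * g = ((q.den : ℚ))⁻¹ * g := by
          field_simp
          linear_combination g * hnum + (u : ℚ) * g * hqd
        rw [← h2]; exact h1
      -- step 2 : dividing by den ^ n stays in G
      have hdn : ∀ n : ℕ, ∀ g ∈ G, (((q.den : ℚ)) ^ n)⁻¹ * g ∈ G := by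
        intro n
        induction n with
        | zero => intro g hg; simpa using hg
        | succ n ih =>
          intro g hg
          have h2 : (((q.den : ℚ)) ^ (n + 1))⁻¹ * g
              = ((q.den : ℚ))⁻¹ * ((((q.den : ℚ)) ^ n)⁻¹ * g) := by
            rw [pow_succ, mul_inv]; ring
          rw [h2]; exact hd _ (ih g hg)
      -- step 3 : primes dividing den are in M
      have hprime : ∀ p : ℕ, p.Prime → p ∣ q.den → p ∈ M := by
        intro p pp pd
        refine ⟨pp, fun g hg n => ?_⟩
        obtain ⟨k, hk⟩ := pow_dvd_pow_of_dvd pd n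
        have hdq : ((q.den : ℚ)) ^ n ≠ 0 := pow_ne_zero _ hden0
        have hkQ : ((q.den : ℚ)) ^ n = (p : ℚ) ^ n * k := by exact_mod_cast hk
        refine ⟨(k : ℚ) * ((((q.den : ℚ)) ^ n)⁻¹ * g), ?_, ?_⟩
        · simpa [nsmul_eq_mul] using G.nsmul_mem (hdn n g hg) k
        · calc (p : ℚ) ^ n * ((k : ℚ) * ((((q.den : ℚ)) ^ n)⁻¹ * g))
              = ((p : ℚ) ^ n * k) * ((((q.den : ℚ)) ^ n)⁻¹ * g) := by ring
            _ = (((q.den : ℚ)) ^ n) * ((((q.den : ℚ)) ^ n)⁻¹ * g) := by rw [← hkQ]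
            _ = g := by rw [← mul_assoc, mul_inv_cancel₀ hdq, one_mul]
      have hinv : ((q.den : ℚ))⁻¹ ∈ zLoc M :=
        inv_nat_mem (zLoc M) q.den q.den_nz
          (fun p pp pd => Subring.subset_closure ⟨p, hprime p pp pd, rfl⟩)
      have hqeq : q = (q.num : ℚ) * ((q.den : ℚ))⁻¹ :=
        ((Rat.num_div_den q).symm).trans (div_eq_mul_inv _ _)
      rw [hqeq]
      exact (zLoc M).mul_mem (intCast_mem (zLoc M) q.num) hinv
    · rw [zLoc, Subring.closure_le]
      rintro x ⟨p, hp, rfl⟩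
      intro g hg
      obtain ⟨h, hh, hph⟩ := hp.2 g hg 1
      have hp0 : (p : ℚ) ≠ 0 := by exact_mod_cast hp.1.ne_zero
      have : (p : ℚ)⁻¹ * g = h := by
        rw [← hph, pow_one, ← mul_assoc, inv_mul_cancel₀ hp0, one_mul]
      rw [this]; exact hh
  exact ⟨(RingEquiv.ofBijective (mulEnd G) (mulEnd_bij G hG)).symm.trans
    (RingEquiv.subringCongr hsub)⟩
end

section
/- Let G be a nontrivial subgroup of the additive group of the rationals. Then every additive group endomorphism f of G is given by multiplication by a fixed rational number; that is, there exists r ∈ ℚ such that f(g) = r·g for all g ∈ G. -/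
/-- Every additive endomorphism of a nontrivial subgroup of `ℚ` is multiplication
by a fixed rational number. -/
theorem endomorphism_eq_mul_rat (G : AddSubgroup ℚ) (hG : G ≠ ⊥) (f : G →+ G) :
    ∃ r : ℚ, ∀ g : G, (f g : ℚ) = r * (g : ℚ) := by
  obtain ⟨g₀, hg₀⟩ := (AddSubgroup.ne_bot_iff_exists_ne_zero).mp hG
  have hq₀ : (g₀ : ℚ) ≠ 0 := by
    simpa [ZeroMemClass.coe_eq_zero] using hg₀
  refine ⟨(f g₀ : ℚ) / (g₀ : ℚ), fun g => ?_⟩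
  set q : ℚ := (g : ℚ)
  set q₀ : ℚ := (g₀ : ℚ)
  set m : ℤ := q₀.num * (q.den : ℤ)
  set n : ℤ := q.num * (q₀.den : ℤ)
  have hm : (m : ℚ) ≠ 0 := by
    have h1 : q₀.num ≠ 0 := Rat.num_ne_zero.mpr hq₀
    have h2 : (q.den : ℤ) ≠ 0 := Int.natCast_ne_zero.mpr q.den_nz
    exact_mod_cast mul_ne_zero h1 h2
  have key : (m : ℚ) * q = (n : ℚ) * q₀ := by
    have h1 : (q.num : ℚ) / (q.den : ℚ) = q := Rat.num_div_den q
    have h2 : (q₀.num : ℚ) / (q₀.den : ℚ) = q₀ := Rat.num_div_den q₀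
    have hd1 : (q.den : ℚ) ≠ 0 := by exact_mod_cast q.den_nz
    have hd2 : (q₀.den : ℚ) ≠ 0 := by exact_mod_cast q₀.den_nz
    rw [← h1, ← h2]
    field_simp
    simp only [m, n]
    push_cast
    ring
  have hsm : m • g = n • g₀ := by
    apply Subtype.ext
    push_cast
    simpa [zsmul_eq_mul] using key
  have hf : (m : ℚ) * (f g : ℚ) = (n : ℚ) * (f g₀ : ℚ) := by
    have := congrArg f hsm
    rw [map_zsmul, map_zsmul] at this
    have := congrArg (fun x : G => (x : ℚ)) this
    simpa [zsmul_eq_mul] using this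
  have : (m : ℚ) * (f g : ℚ) = (m : ℚ) * ((f g₀ : ℚ) / q₀ * q) := by
    rw [hf]
    field_simp
    linear_combination (-(f g₀ : ℚ)) * key
  exact mul_left_cancel₀ hm this
end

section
/- There exist a sequence of natural numbers (aᵢ)_{i≥0}, a sequence of primes (qᵢ)_{i≥1}, and a family (P_{i,j})_{i,j≥0} of pairwise disjoint finite sets of primes such that: (1) for each i and j, the images of the primes in P_{i,j} generate the multiplicative group of units of ℤ/aᵢℤ; (2) every p ∈ P_{i,j} is a quadratic residue modulo q_k for every k > i; (3) a₀ = 3, each aᵢ divides a_{i+1}, q_{i+1} divides a_{i+1}, and every positive integer m divides aᵢ for some i; (4) qᵢ is coprime to aⱼ for all j < i; (5) q_k ∉ P_{i,j} for all k, i, j. -/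
noncomputable def qChoice (M bound : ℕ) : ℕ := sInf {p | p.Prime ∧ p ≡ 1 [MOD M] ∧ bound < p}

noncomputable def pick (A Q B : ℕ) (u : ZMod A) : ℕ :=
  sInf {p | p.Prime ∧ (p : ZMod A) = u ∧ (p : ZMod Q) = 1 ∧ B < p}

noncomputable def mkP (A Q B : ℕ) : Finset ℕ :=
  if h : A ≠ 0 then
    haveI : NeZero A := ⟨h⟩
    (Finset.univ : Finset (ZMod A)ˣ).image (fun u : (ZMod A)ˣ => pick A Q B (u : ZMod A))
  else ∅

noncomputable def St : ℕ → ℕ × ℕ × Finset ℕ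
  | 0 => (3, 1, ∅)
  | n+1 =>
    let M := 4 * ∏ j ∈ (Finset.range n).attach, ∏ p ∈ (St (j.1+1)).2.2, p
    let qn := qChoice M (St n).1
    let an := (St n).1 * (n+1) * qn
    let Q := qn * ∏ k ∈ (Finset.Ioc (Nat.unpair n).1 n).attach, (St k.1).2.1
    (an, qn, mkP (St (min (Nat.unpair n).1 n)).1 Q (an + qn + M))
decreasing_by
  all_goals first
    | omega
    | (have h2 := j.2; simp only [Finset.mem_range] at h2; omega)
    | (have h2 := k.2; simp only [Finset.mem_Ioc] at h2; omega)

noncomputable def aa (n : ℕ) : ℕ := (St n).1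
noncomputable def qq (n : ℕ) : ℕ := (St n).2.1
noncomputable def Pst (n : ℕ) : Finset ℕ := (St (n+1)).2.2
noncomputable def MM (n : ℕ) : ℕ := 4 * ∏ j ∈ Finset.range n, ∏ p ∈ Pst j, p
noncomputable def QQ (n : ℕ) : ℕ := qq (n+1) * ∏ k ∈ Finset.Ioc (Nat.unpair n).1 n, qq k
noncomputable def BB (n : ℕ) : ℕ := aa (n+1) + qq (n+1) + MM n

lemma St_succ (n : ℕ) : St (n+1) =
    (let M := 4 * ∏ j ∈ (Finset.range n).attach, ∏ p ∈ (St (j.1+1)).2.2, p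
    let qn := qChoice M (St n).1
    let an := (St n).1 * (n+1) * qn
    let Q := qn * ∏ k ∈ (Finset.Ioc (Nat.unpair n).1 n).attach, (St k.1).2.1
    (an, qn, mkP (St (min (Nat.unpair n).1 n)).1 Q (an + qn + M))) := by
  conv_lhs => rw [St]

lemma aa_zero : aa 0 = 3 := by rw [aa, St]
lemma qq_zero : qq 0 = 1 := by rw [qq, St]

lemma qq_succ (n : ℕ) : qq (n+1) = qChoice (MM n) (aa n) := by
  rw [qq, St_succ]
  simp only [MM, aa, Pst]
  rw [Finset.prod_attach (f := fun j => ∏ p ∈ (St (j+1)).2.2, p)]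

lemma aa_succ (n : ℕ) : aa (n+1) = aa n * (n+1) * qq (n+1) := by
  conv_lhs => rw [aa, St_succ]
  rw [qq_succ]
  simp only [MM, aa, qq, Pst]
  rw [Finset.prod_attach (f := fun j => ∏ p ∈ (St (j+1)).2.2, p)]

lemma Pst_def (n : ℕ) : Pst n = mkP (aa (Nat.unpair n).1) (QQ n) (BB n) := by
  conv_lhs => rw [Pst, St_succ]
  simp only
  rw [min_eq_left (Nat.unpair_left_le n)]
  rw [Finset.prod_attach (f := fun j => ∏ p ∈ (St (j+1)).2.2, p),
      Finset.prod_attach (f := fun k => (St k).2.1)]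
  rw [QQ, BB, MM, qq_succ, aa_succ, qq_succ]
  simp only [MM, aa, qq, Pst]

def GoodInv (s : ℕ) : Prop :=
  3 ≤ aa s ∧
  (∀ m, m ≤ s → aa m ≤ aa s) ∧
  ((qq (s+1)).Prime ∧ qq (s+1) ≡ 1 [MOD MM s] ∧ aa s < qq (s+1)) ∧
  ((∀ p ∈ Pst s, p.Prime ∧ (p : ZMod (QQ s)) = 1 ∧ BB s < p) ∧
    ∀ u : (ZMod (aa (Nat.unpair s).1))ˣ,
      ∃ p ∈ Pst s, (p : ZMod (aa (Nat.unpair s).1)) = (u : ZMod (aa (Nat.unpair s).1)))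

theorem inv_all (s : ℕ) : GoodInv s := by
  induction s using Nat.strong_induction_on with
  | _ s ih =>
  unfold GoodInv at ih ⊢
  -- aa facts
  have haa : 3 ≤ aa s ∧ ∀ m, m ≤ s → aa m ≤ aa s := by
    match s with
    | 0 =>
      refine ⟨by rw [aa_zero], fun m hm => ?_⟩
      have : m = 0 := by omega
      subst this; exact le_refl _
    | t+1 =>
      have hqt := (ih t (by omega)).2.2.1.1
      have h1 : 1 ≤ qq (t+1) := hqt.one_lt.le.trans' (by omega)
      have h3t := (ih t (by omega)).1
      have hstep : aa t ≤ aa (t+1) := by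
        rw [aa_succ]
        calc aa t = aa t * 1 * 1 := by ring
        _ ≤ aa t * (t+1) * qq (t+1) := Nat.mul_le_mul (Nat.mul_le_mul_left _ (by omega)) h1
      refine ⟨le_trans h3t hstep, fun m hm => ?_⟩
      rcases Nat.lt_or_ge m (t+1) with h | h
      · exact le_trans ((ih t (by omega)).2.1 m (by omega)) hstep
      · have : m = t+1 := by omega
        subst this; exact le_refl _
  -- earlier P-set elements are prime
  have hPstprime : ∀ j, j < s → ∀ p ∈ Pst j, p.Prime := by
    intro j hj p hp
    exact ((ih j hj).2.2.2.1 p hp).1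
  have hMMpos : 0 < MM s := by
    rw [MM]
    refine Nat.mul_pos (by norm_num) (Finset.prod_pos ?_)
    intro j hj
    exact Finset.prod_pos fun p hp =>
      (hPstprime j (Finset.mem_range.mp hj) p hp).pos
  -- the q-fact at s+1
  have hq : (qq (s+1)).Prime ∧ qq (s+1) ≡ 1 [MOD MM s] ∧ aa s < qq (s+1) := by
    rw [qq_succ, qChoice]
    refine Nat.sInf_mem (s := {p | Nat.Prime p ∧ p ≡ 1 [MOD MM s] ∧ aa s < p}) ?_
    obtain ⟨p, hp, hgt, hmod⟩ := Nat.exists_prime_gt_modEq_one (aa s) hMMpos.ne'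
    exact ⟨p, hp, hmod, hgt⟩
  refine ⟨haa.1, haa.2, hq, ?_⟩
  -- the P-fact at s
  set i := (Nat.unpair s).1 with hidef
  have hit : i ≤ s := Nat.unpair_left_le s
  have haam : ∀ m, m ≤ s → 3 ≤ aa m ∧ ∀ m', m' ≤ m → aa m' ≤ aa m := by
    intro m hm
    rcases Nat.lt_or_ge m s with h | h
    · exact ⟨(ih m h).1, (ih m h).2.1⟩
    · have : m = s := by omega
      subst this; exact haa
  have haai : 3 ≤ aa i := (haam i hit).1
  have hqk : ∀ k, 1 ≤ k → k ≤ s+1 → (qq k).Prime ∧ aa (k-1) < qq k := by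
    intro k h1 h2
    rcases Nat.lt_or_ge k (s+1) with h | h
    · have h3 := (ih (k-1) (by omega)).2.2.1
      have hk : k - 1 + 1 = k := by omega
      rw [hk] at h3
      exact ⟨h3.1, h3.2.2⟩
    · have hk : k = s+1 := by omega
      subst hk
      simpa using ⟨hq.1, hq.2.2⟩
  have haale : ∀ k, i < k → k ≤ s+1 → aa i < qq k := by
    intro k hik hk
    have h1 : aa i ≤ aa (k-1) := (haam (k-1) (by omega)).2 i (by omega)
    exact lt_of_le_of_lt h1 (hqk k (by omega) hk).2
  have hcopk : ∀ k, i < k → k ≤ s+1 → Nat.Coprime (aa i) (qq k) := by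
    intro k hik hk
    have hp := (hqk k (by omega) hk).1
    exact (((Nat.Prime.coprime_iff_not_dvd hp).mpr (fun hd =>
      absurd (Nat.le_of_dvd (by omega) hd) (not_le.mpr (haale k hik hk))))).symm
  have hcop : Nat.Coprime (aa i) (QQ s) := by
    rw [QQ]
    exact Nat.Coprime.mul_right (hcopk (s+1) (by omega) le_rfl)
      (Nat.Coprime.prod_right fun k hk => hcopk k (Finset.mem_Ioc.mp hk).1
        (le_trans (Finset.mem_Ioc.mp hk).2 (Nat.le_succ s)))
  have hQQpos : 0 < QQ s := by
    rw [QQ]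
    refine Nat.mul_pos (hqk (s+1) (by omega) le_rfl).1.pos (Finset.prod_pos ?_)
    intro k hk
    have hk' := Finset.mem_Ioc.mp hk
    exact (hqk k (by omega) (by omega)).1.pos
  haveI : NeZero (aa i * QQ s) := ⟨(Nat.mul_pos (by omega) hQQpos).ne'⟩
  haveI : NeZero (aa i) := ⟨by omega⟩
  have hpickmem : ∀ u : (ZMod (aa i))ˣ,
      pick (aa i) (QQ s) (BB s) (u : ZMod (aa i)) ∈
      {p : ℕ | p.Prime ∧ (p : ZMod (aa i)) = (u : ZMod (aa i)) ∧
        (p : ZMod (QQ s)) = 1 ∧ BB s < p} := by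
    intro u
    refine Nat.sInf_mem ?_
    set c := ZMod.chineseRemainder hcop with hc
    have hrunit : IsUnit (c.symm ((u : ZMod (aa i)), (1 : ZMod (QQ s)))) := by
      have hu2 : IsUnit (((u : ZMod (aa i)), (1 : ZMod (QQ s))) :
          ZMod (aa i) × ZMod (QQ s)) :=
        ⟨MulEquiv.prodUnits.symm (u, 1), rfl⟩
      exact hu2.map (c.symm : ZMod (aa i) × ZMod (QQ s) →+* ZMod (aa i * QQ s))
    obtain ⟨p, hgt, hp, hcast⟩ := Nat.forall_exists_prime_gt_and_eq_mod hrunit (BB s)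
    have h2 : c ((p : ℕ) : ZMod (aa i * QQ s)) = ((p : ZMod (aa i)), (p : ZMod (QQ s))) := by
      have := map_natCast (f := (c : ZMod (aa i * QQ s) →+* ZMod (aa i) × ZMod (QQ s))) p
      simp only [RingEquiv.coe_toRingHom] at this
      rw [this]
      ext <;> simp
    rw [hcast, RingEquiv.apply_symm_apply] at h2
    have h3 := congrArg Prod.fst h2
    have h4 := congrArg Prod.snd h2
    simp only at h3 h4
    exact ⟨p, hp, h3.symm, h4.symm, hgt⟩
  have hPd : Pst s = mkP (aa i) (QQ s) (BB s) := Pst_def s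
  rw [mkP, dif_pos (show aa i ≠ 0 by omega)] at hPd
  constructor
  · intro p hp
    rw [hPd] at hp
    obtain ⟨u, -, rfl⟩ := Finset.mem_image.mp hp
    have h := hpickmem u
    exact ⟨h.1, h.2.2.1, h.2.2.2⟩
  · intro u
    refine ⟨pick (aa i) (QQ s) (BB s) (u : ZMod (aa i)), ?_, (hpickmem u).2.1⟩
    rw [hPd]
    exact Finset.mem_image_of_mem _ (Finset.mem_univ u)

lemma Gaa3 (n : ℕ) : 3 ≤ aa n := (inv_all n).1
lemma Gmono {m n : ℕ} (h : m ≤ n) : aa m ≤ aa n := (inv_all n).2.1 m h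
lemma Gq (k : ℕ) (hk : 1 ≤ k) :
    (qq k).Prime ∧ qq k ≡ 1 [MOD MM (k-1)] ∧ aa (k-1) < qq k := by
  have h := (inv_all (k-1)).2.2.1
  have hk1 : k - 1 + 1 = k := by omega
  rwa [hk1] at h
lemma GP1 (n : ℕ) : ∀ p ∈ Pst n, p.Prime ∧ (p : ZMod (QQ n)) = 1 ∧ BB n < p :=
  (inv_all n).2.2.2.1
lemma GP2 (n : ℕ) : ∀ u : (ZMod (aa (Nat.unpair n).1))ˣ,
    ∃ p ∈ Pst n, (p : ZMod (aa (Nat.unpair n).1)) = (u : ZMod (aa (Nat.unpair n).1)) :=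
  (inv_all n).2.2.2.2

lemma qq_dvd_aa (k : ℕ) : qq (k+1) ∣ aa (k+1) :=
  ⟨aa k * (k+1), by rw [aa_succ]; ring⟩

lemma pdvdMM {n l : ℕ} (h : n < l) {p : ℕ} (hp : p ∈ Pst n) : p ∣ MM l := by
  rw [MM]
  exact Dvd.dvd.mul_left
    (dvd_trans (Finset.dvd_prod_of_mem (fun p => p) hp)
      (Finset.dvd_prod_of_mem (fun j => ∏ p ∈ Pst j, p) (Finset.mem_range.mpr h))) 4

lemma MMpos (l : ℕ) : 0 < MM l := by
  rw [MM]
  refine Nat.mul_pos (by norm_num) (Finset.prod_pos ?_)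
  intro j _
  exact Finset.prod_pos fun p hp => ((GP1 j p hp).1).pos

lemma MM_le_BB (n : ℕ) : MM n ≤ BB n := by rw [BB]; omega
lemma aa_le_BB (n : ℕ) : aa (n+1) ≤ BB n := by rw [BB]; omega

lemma qq_mod_four (k : ℕ) (hk : 1 ≤ k) : qq k % 4 = 1 := by
  have h := (Gq k hk).2.1
  have h4 : (4:ℕ) ∣ MM (k-1) := by rw [MM]; exact Dvd.intro _ rfl
  have := h.of_dvd h4
  simpa [Nat.ModEq] using this

lemma qq_dvd_QQ {n k : ℕ} (hik : (Nat.unpair n).1 < k) (hk : k ≤ n+1) : qq k ∣ QQ n := by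
  rw [QQ]
  rcases Nat.lt_or_ge k (n+1) with h | h
  · exact Dvd.dvd.mul_left
      (Finset.dvd_prod_of_mem _ (Finset.mem_Ioc.mpr ⟨hik, by omega⟩)) _
  · have : k = n+1 := by omega
    subst this
    exact Dvd.intro _ rfl

lemma cast_eq_one_of_modEq {p m : ℕ} (h : p ≡ 1 [MOD m]) : ((p : ℕ) : ZMod m) = 1 := by
  have := (ZMod.natCast_eq_natCast_iff p 1 m).mpr h
  simpa using this

lemma modEq_one_of_cast {p m : ℕ} (h : ((p : ℕ) : ZMod m) = 1) : p ≡ 1 [MOD m] := by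
  refine (ZMod.natCast_eq_natCast_iff p 1 m).mp ?_
  simpa using h

lemma Pst_disjoint {n n' : ℕ} (h : n ≠ n') : Disjoint (Pst n) (Pst n') := by
  -- wlog n < n'
  have key : ∀ a b : ℕ, a < b → Disjoint (Pst a) (Pst b) := by
    intro a b hab
    rw [Finset.disjoint_left]
    intro p hpa hpb
    have h1 : p ∣ MM b := pdvdMM hab hpa
    have h2 : p ≤ MM b := Nat.le_of_dvd (MMpos b) h1
    have h3 : BB b < p := (GP1 b p hpb).2.2
    have := MM_le_BB b
    omega
  rcases Nat.lt_or_ge n n' with hlt | hge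
  · exact key n n' hlt
  · exact (key n' n (by omega)).symm

lemma qq_notin_Pst (k : ℕ) (hk : 1 ≤ k) (n : ℕ) : qq k ∉ Pst n := by
  intro hmem
  rcases Nat.lt_or_ge (n+1) k with h | h
  · -- k ≥ n+2 : qq k ≡ 1 mod itself, contradiction
    have h1 : qq k ∣ MM (k-1) := pdvdMM (by omega) hmem
    have h2 := ((Gq k hk).2.1).of_dvd h1
    have h3 := (Gq k hk).1.two_le
    rw [Nat.ModEq, Nat.mod_self, Nat.mod_eq_of_lt (by omega)] at h2
    omega
  · -- k ≤ n+1 : qq k ≤ aa k ≤ aa (n+1) ≤ BB n < qq k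
    have h1 : qq k ≤ aa k := by
      match k, hk with
      | k'+1, _ => exact Nat.le_of_dvd (by have := Gaa3 (k'+1); omega) (qq_dvd_aa k')
    have h2 : aa k ≤ aa (n+1) := Gmono h
    have h3 : BB n < qq k := (GP1 n _ hmem).2.2
    have := aa_le_BB n
    omega




/-- There are sequences `(aᵢ)`, primes `(qᵢ)_{i ≥ 1}`, and pairwise disjoint finite
sets of primes `(P_{i,j})` satisfying conditions (1)-(5) of the lemma. -/
theorem exists_special_sequences :
    ∃ (a : ℕ → ℕ) (q : ℕ → ℕ) (P : ℕ → ℕ → Finset ℕ),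
      (∀ i, 1 ≤ i → (q i).Prime) ∧
      (∀ i j, ∀ p ∈ P i j, p.Prime) ∧
      (∀ i j i' j', (i, j) ≠ (i', j') → Disjoint (P i j) (P i' j')) ∧
      -- (1) the images of the primes in `P i j` generate `(ℤ/aᵢℤ)ˣ`
      (∀ i j, Subgroup.closure
        {u : (ZMod (a i))ˣ | ∃ p ∈ P i j, (u : ZMod (a i)) = (p : ZMod (a i))} = ⊤) ∧
      -- (2) every `p ∈ P i j` is a quadratic residue modulo `q k` for `k > i`
      (∀ i j k, i < k → ∀ p ∈ P i j, IsSquare ((p : ZMod (q k)))) ∧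
      -- (3) `a 0 = 3`, `aᵢ ∣ a_{i+1}`, `q_{i+1} ∣ a_{i+1}`, and every positive `m`
      -- divides some `aᵢ`
      a 0 = 3 ∧ (∀ i, a i ∣ a (i + 1)) ∧ (∀ i, q (i + 1) ∣ a (i + 1)) ∧
      (∀ m : ℕ, 0 < m → ∃ i, m ∣ a i) ∧
      -- (4) `qᵢ` is coprime to `aⱼ` for `j < i`
      (∀ i j, j < i → Nat.Coprime (q i) (a j)) ∧
      -- (5) `q k ∉ P i j`
      (∀ k, 1 ≤ k → ∀ i j, q k ∉ P i j) := by
  refine ⟨aa, qq, fun i j => Pst (Nat.pair i j), ?_, ?_, ?_, ?_, ?_, aa_zero, ?_, ?_, ?_, ?_, ?_⟩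
  · exact fun i hi => (Gq i hi).1
  · exact fun i j p hp => (GP1 _ p hp).1
  · intro i j i' j' hne
    refine Pst_disjoint (fun hEq => hne ?_)
    have := Nat.pair_eq_pair.mp hEq
    exact Prod.ext this.1 this.2
  · -- generation
    intro i j
    have hsurj := GP2 (Nat.pair i j)
    rw [show (Nat.unpair (Nat.pair i j)).1 = i by simp] at hsurj
    have hset : {u : (ZMod (aa i))ˣ | ∃ p ∈ Pst (Nat.pair i j),
        (u : ZMod (aa i)) = (p : ZMod (aa i))} = Set.univ := by
      refine Set.eq_univ_iff_forall.mpr fun u => ?_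
      obtain ⟨p, hp, hpe⟩ := hsurj u
      exact ⟨p, hp, hpe.symm⟩
    rw [hset]
    exact Subgroup.closure_univ
  · -- quadratic residues
    intro i j k hik p hp
    set n := Nat.pair i j with hn
    have hi : (Nat.unpair n).1 = i := by rw [hn, Nat.unpair_pair]
    have hpfacts := GP1 n p hp
    have hpprime := hpfacts.1
    rcases Nat.lt_or_ge (n+1) k with h | h
    · -- k ≥ n+2 : quadratic reciprocity
      have hqf := Gq k (by omega)
      have hqprime := hqf.1
      have hp2 : p ≠ 2 := by
        have h1 : BB n < p := hpfacts.2.2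
        have h2 := aa_le_BB n
        have h3 := Gaa3 (n+1)
        omega
      haveI : Fact p.Prime := ⟨hpprime⟩
      haveI : Fact (qq k).Prime := ⟨hqprime⟩
      have hdvd : p ∣ MM (k-1) := pdvdMM (by omega) hp
      have hmod : qq k ≡ 1 [MOD p] := (hqf.2.1).of_dvd hdvd
      have hsq : IsSquare ((qq k : ℕ) : ZMod p) := by
        rw [cast_eq_one_of_modEq hmod]
        exact IsSquare.one
      exact (ZMod.exists_sq_eq_prime_iff_of_mod_four_eq_one
        (qq_mod_four k (by omega)) hp2).mpr hsq
    · -- i < k ≤ n+1 : p ≡ 1 mod (q k)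
      have hdvd : qq k ∣ QQ n := qq_dvd_QQ (by omega) h
      have h1 : p ≡ 1 [MOD QQ n] := modEq_one_of_cast hpfacts.2.1
      have h2 : p ≡ 1 [MOD qq k] := h1.of_dvd hdvd
      rw [cast_eq_one_of_modEq h2]
      exact IsSquare.one
  · exact fun i => ⟨(i+1) * qq (i+1), by rw [aa_succ]; ring⟩
  · exact fun i => qq_dvd_aa i
  · intro m hm
    refine ⟨m, ?_⟩
    match m, hm with
    | t+1, _ => exact ⟨aa t * qq (t+1), by rw [aa_succ]; ring⟩
  · intro i j hji
    have hi1 : 1 ≤ i := by omega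
    have hq := Gq i hi1
    refine (hq.1.coprime_iff_not_dvd).mpr fun hdvd => ?_
    have h1 : aa j ≤ aa (i-1) := Gmono (by omega)
    have h2 : qq i ≤ aa j := Nat.le_of_dvd (by have := Gaa3 j; omega) hdvd
    omega
  · exact fun k hk i j => qq_notin_Pst k hk (Nat.pair i j)
end

section
/- Let P be a set of primes containing all but finitely many primes. Then the subring ℤ[1/p : p ∈ P] of ℚ has 1 in the stable range. -/
/-- A ring `R` has 1 in the stable range if whenever `f₁ * g₁ + f₂ * g₂ = 1`,
there is `h` such that `f₁ + f₂ * h` is a unit. -/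
def HasOneInStableRange (R : Type) [Ring R] : Prop :=
  ∀ f₁ f₂ g₁ g₂ : R, f₁ * g₁ + f₂ * g₂ = 1 → ∃ h : R, IsUnit (f₁ + f₂ * h)

lemma inv_mem_zLoc (P : Set ℕ) :
    ∀ n : ℕ, n ≠ 0 → (∀ q : ℕ, q.Prime → q ∣ n → q ∈ P) → ((n : ℚ))⁻¹ ∈ zLoc P := by
  intro n
  induction n using Nat.strong_induction_on with
  | _ n ih =>
    intro hn hfac
    rcases eq_or_ne n 1 with rfl | h1
    · simpa using (zLoc P).one_mem
    · have hp : n.minFac.Prime := Nat.minFac_prime h1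
      have hpd : n.minFac ∣ n := Nat.minFac_dvd n
      have hpP : n.minFac ∈ P := hfac _ hp hpd
      obtain ⟨m, hm⟩ := hpd
      have hm0 : m ≠ 0 := by rintro rfl; simp at hm; exact hn hm
      have h2m : 2 * m ≤ n := by
        calc 2 * m ≤ n.minFac * m := Nat.mul_le_mul_right m hp.two_le
        _ = n := hm.symm
      have hmlt : m < n := by omega
      have hmem : (m : ℚ)⁻¹ ∈ zLoc P :=
        ih m hmlt hm0 (fun q hq hqd =>
          hfac q hq (hqd.trans ⟨n.minFac, by rw [mul_comm]; exact hm⟩))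
      have hpmem : ((n.minFac : ℚ))⁻¹ ∈ zLoc P :=
        Subring.subset_closure ⟨n.minFac, hpP, rfl⟩
      have heq : ((n : ℚ))⁻¹ = (n.minFac : ℚ)⁻¹ * (m : ℚ)⁻¹ := by
        have hq : (n : ℚ) = (n.minFac : ℚ) * (m : ℚ) := by exact_mod_cast congrArg (Nat.cast : ℕ → ℚ) hm
        rw [hq, mul_inv]
      rw [heq]; exact mul_mem hpmem hmem

lemma rep_zLoc (P : Set ℕ) (hP : ∀ p ∈ P, p.Prime) {x : ℚ} (hx : x ∈ zLoc P) :
    ∃ (a : ℤ) (d : ℕ), d ≠ 0 ∧ (∀ q : ℕ, q.Prime → q ∣ d → q ∈ P) ∧ x = a / d := by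
  induction hx using Subring.closure_induction with
  | mem x hx =>
    obtain ⟨p, hpP, rfl⟩ := hx
    refine ⟨1, p, (hP p hpP).pos.ne', ?_, by push_cast; rw [one_div]⟩
    intro q hq hqd
    rwa [(Nat.prime_dvd_prime_iff_eq hq (hP p hpP)).mp hqd]
  | zero =>
    exact ⟨0, 1, one_ne_zero, fun q hq hqd => absurd (Nat.dvd_one.mp hqd) hq.ne_one, by simp⟩
  | one =>
    exact ⟨1, 1, one_ne_zero, fun q hq hqd => absurd (Nat.dvd_one.mp hqd) hq.ne_one, by simp⟩
  | add x y hx hy ihx ihy =>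
    obtain ⟨a, d, hd0, hdP, hxe⟩ := ihx
    obtain ⟨b, e, he0, heP, hye⟩ := ihy
    refine ⟨a * e + b * d, d * e, mul_ne_zero hd0 he0,
      fun q hq hqd => (hq.dvd_mul.mp hqd).elim (hdP q hq) (heP q hq), ?_⟩
    have hd' : (d : ℚ) ≠ 0 := Nat.cast_ne_zero.mpr hd0
    have he' : (e : ℚ) ≠ 0 := Nat.cast_ne_zero.mpr he0
    rw [hxe, hye]; field_simp; push_cast; ring
  | neg x hx ihx =>
    obtain ⟨a, d, hd0, hdP, hxe⟩ := ihx
    exact ⟨-a, d, hd0, hdP, by rw [hxe]; push_cast; ring⟩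
  | mul x y hx hy ihx ihy =>
    obtain ⟨a, d, hd0, hdP, hxe⟩ := ihx
    obtain ⟨b, e, he0, heP, hye⟩ := ihy
    refine ⟨a * b, d * e, mul_ne_zero hd0 he0,
      fun q hq hqd => (hq.dvd_mul.mp hqd).elim (hdP q hq) (heP q hq), ?_⟩
    have hd' : (d : ℚ) ≠ 0 := Nat.cast_ne_zero.mpr hd0
    have he' : (e : ℚ) ≠ 0 := Nat.cast_ne_zero.mpr he0
    rw [hxe, hye]; field_simp; push_cast; ring

lemma isUnit_zLoc (P : Set ℕ) (x : zLoc P) (N : ℤ) (D : ℕ) (hD : D ≠ 0)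
    (hN : N ≠ 0) (hNP : ∀ q : ℕ, q.Prime → (q : ℤ) ∣ N → q ∈ P)
    (hx : (x : ℚ) = N / D) : IsUnit x := by
  have habs : ((N.natAbs : ℚ))⁻¹ ∈ zLoc P := by
    refine inv_mem_zLoc P N.natAbs (Int.natAbs_ne_zero.mpr hN) ?_
    intro q hq hqd
    exact hNP q hq ((Int.natCast_dvd_natCast.mpr hqd).trans (Int.natAbs_dvd.mpr dvd_rfl))
  have hinv : ((N : ℚ))⁻¹ ∈ zLoc P := by
    rcases Int.natAbs_eq N with h | h
    · rw [h, Int.cast_natCast]; exact habs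
    · rw [h, Int.cast_neg, Int.cast_natCast, inv_neg]; exact neg_mem habs
  have hDmem : ((D : ℚ)) ∈ zLoc P := natCast_mem _ D
  refine IsUnit.of_mul_eq_one (a := x) ⟨(D : ℚ) * (N : ℚ)⁻¹, mul_mem hDmem hinv⟩ ?_
  apply Subtype.ext
  have hN' : (N : ℚ) ≠ 0 := Int.cast_ne_zero.mpr hN
  have hD' : (D : ℚ) ≠ 0 := Nat.cast_ne_zero.mpr hD
  show (x : ℚ) * ((D : ℚ) * (N : ℚ)⁻¹) = 1
  rw [hx]; field_simp

/-- If `P` contains all but finitely many primes, then `ℤ[1/p : p ∈ P]` has 1 in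
the stable range. -/
theorem hasOneInStableRange_of_cofinite (P : Set ℕ) (hP : ∀ p ∈ P, p.Prime)
    (hcof : ({p : ℕ | p.Prime} \ P).Finite) :
    HasOneInStableRange (zLoc P) := by
  classical
  intro f₁ f₂ g₁ g₂ heq
  by_cases hf₁ : f₁ = 0
  · refine ⟨g₂, ?_⟩
    have h1 : f₁ + f₂ * g₂ = 1 := by rw [hf₁] at heq ⊢; simpa using heq
    rw [h1]; exact isUnit_one
  obtain ⟨a₁, d₁, hd₁0, hd₁P, hr₁⟩ := rep_zLoc P hP f₁.2
  obtain ⟨a₂, d₂, hd₂0, hd₂P, hr₂⟩ := rep_zLoc P hP f₂.2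
  obtain ⟨b₁, e₁, he₁0, he₁P, hs₁⟩ := rep_zLoc P hP g₁.2
  obtain ⟨b₂, e₂, he₂0, he₂P, hs₂⟩ := rep_zLoc P hP g₂.2
  have hd₁' : (d₁ : ℚ) ≠ 0 := Nat.cast_ne_zero.mpr hd₁0
  have hd₂' : (d₂ : ℚ) ≠ 0 := Nat.cast_ne_zero.mpr hd₂0
  have he₁' : (e₁ : ℚ) ≠ 0 := Nat.cast_ne_zero.mpr he₁0
  have he₂' : (e₂ : ℚ) ≠ 0 := Nat.cast_ne_zero.mpr he₂0
  have hq : (f₁ : ℚ) * (g₁ : ℚ) + (f₂ : ℚ) * (g₂ : ℚ) = 1 := by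
    exact_mod_cast congrArg Subtype.val heq
  rw [hr₁, hr₂, hs₁, hs₂] at hq
  have hint : a₁ * b₁ * ((d₂ : ℤ) * (e₂ : ℤ)) + a₂ * b₂ * ((d₁ : ℤ) * (e₁ : ℤ))
      = ((d₁ * e₁ * d₂ * e₂ : ℕ) : ℤ) := by
    have : ((a₁ * b₁ * ((d₂ : ℤ) * (e₂ : ℤ)) + a₂ * b₂ * ((d₁ : ℤ) * (e₁ : ℤ)) : ℤ) : ℚ)
        = ((d₁ * e₁ * d₂ * e₂ : ℕ) : ℚ) := by
      field_simp at hq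
      push_cast
      linear_combination hq
    exact_mod_cast this
  have hkey : ∀ q : ℕ, q.Prime → q ∉ P → ¬ ((q : ℤ) ∣ a₁ ∧ (q : ℤ) ∣ a₂) := by
    rintro q hq' hqP ⟨h1, h2⟩
    have hdvd : (q : ℤ) ∣ ((d₁ * e₁ * d₂ * e₂ : ℕ) : ℤ) := by
      rw [← hint]
      exact dvd_add ((h1.mul_right b₁).mul_right _) ((h2.mul_right b₂).mul_right _)
    have hdn : q ∣ d₁ * e₁ * d₂ * e₂ := Int.natCast_dvd_natCast.mp hdvd
    rcases hq'.dvd_mul.mp hdn with h' | h'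
    · rcases hq'.dvd_mul.mp h' with h'' | h''
      · rcases hq'.dvd_mul.mp h'' with h3 | h3
        · exact hqP (hd₁P q hq' h3)
        · exact hqP (he₁P q hq' h3)
      · exact hqP (hd₂P q hq' h'')
    · exact hqP (he₂P q hq' h')
  by_cases hall : ∀ q : ℕ, q.Prime → q ∈ P
  · -- all primes invertible: f₁ itself is a unit
    refine ⟨0, ?_⟩
    have h1 : f₁ + f₂ * 0 = f₁ := by ring
    rw [h1]
    have ha₁ : a₁ ≠ 0 := by
      rintro rfl
      apply hf₁
      apply Subtype.ext
      rw [hr₁]; simp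
    exact isUnit_zLoc P f₁ a₁ d₁ hd₁0 ha₁ (fun q hq' _ => hall q hq') hr₁
  · push_neg at hall
    obtain ⟨q₀, hq₀, hq₀P⟩ := hall
    set S : Finset ℕ := hcof.toFinset with hS
    set T : Finset ℕ := S.filter (fun q => ¬ (q : ℤ) ∣ a₁) with hT
    set m : ℕ := T.prod id with hm
    set N : ℤ := a₁ * (d₂ : ℤ) + a₂ * (m : ℤ) * (d₁ : ℤ) with hN
    have hNfac : ∀ q : ℕ, q.Prime → (q : ℤ) ∣ N → q ∈ P := by
      intro q hq' hdvd
      by_contra hqP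
      have hqZ : Prime (q : ℤ) := Nat.prime_iff_prime_int.mp hq'
      have hqS : q ∈ S := hcof.mem_toFinset.mpr ⟨hq', hqP⟩
      have hqd₁ : ¬ (q : ℤ) ∣ (d₁ : ℤ) := fun hd =>
        hqP (hd₁P q hq' (Int.natCast_dvd_natCast.mp hd))
      have hqd₂ : ¬ (q : ℤ) ∣ (d₂ : ℤ) := fun hd =>
        hqP (hd₂P q hq' (Int.natCast_dvd_natCast.mp hd))
      by_cases hqa₁ : (q : ℤ) ∣ a₁
      · have hqa₂ : ¬ (q : ℤ) ∣ a₂ := fun h2 => hkey q hq' hqP ⟨hqa₁, h2⟩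
        have hqm : ¬ q ∣ m := by
          intro hdm
          obtain ⟨r, hrT, hqr⟩ := (Nat.Prime.prime hq').dvd_finset_prod_iff id |>.mp hdm
          have hrS : r ∈ S := (Finset.mem_filter.mp hrT).1
          have hr : r.Prime := (hcof.mem_toFinset.mp hrS).1
          have : q = r := (Nat.prime_dvd_prime_iff_eq hq' hr).mp hqr
          exact (Finset.mem_filter.mp hrT).2 (this ▸ hqa₁)
        have h2 : (q : ℤ) ∣ a₂ * (m : ℤ) * (d₁ : ℤ) :=
          (dvd_add_right (hqa₁.mul_right (d₂ : ℤ))).mp hdvd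
        rcases hqZ.dvd_mul.mp h2 with h' | h'
        · rcases hqZ.dvd_mul.mp h' with h'' | h''
          · exact hqa₂ h''
          · exact hqm (Int.natCast_dvd_natCast.mp h'')
        · exact hqd₁ h'
      · have hqm : q ∣ m := Finset.dvd_prod_of_mem id (Finset.mem_filter.mpr ⟨hqS, hqa₁⟩)
        have hqmZ : (q : ℤ) ∣ (m : ℤ) := Int.natCast_dvd_natCast.mpr hqm
        have h2 : (q : ℤ) ∣ a₁ * (d₂ : ℤ) :=
          (dvd_add_left ((hqmZ.mul_left a₂).mul_right (d₁ : ℤ))).mp hdvd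
        rcases hqZ.dvd_mul.mp h2 with h' | h'
        · exact hqa₁ h'
        · exact hqd₂ h'
    have hN0 : N ≠ 0 := by
      intro h0
      exact hq₀P (hNfac q₀ hq₀ (h0 ▸ dvd_zero _))
    refine ⟨⟨(m : ℚ), natCast_mem _ m⟩, ?_⟩
    apply isUnit_zLoc P _ N (d₁ * d₂) (mul_ne_zero hd₁0 hd₂0) hN0 hNfac
    show (f₁ : ℚ) + (f₂ : ℚ) * (m : ℚ) = (N : ℚ) / ((d₁ * d₂ : ℕ) : ℚ)
    rw [hr₁, hr₂, hN]
    push_cast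
    field_simp
    try ring
end

section
/- Let P be a finite set of primes. Then the subring ℤ[1/p : p ∈ P] of ℚ does not have 1 in the stable range. -/
lemma zLoc_rep (P : Set ℕ) (hP : ∀ p ∈ P, p.Prime) {x : ℚ} (hx : x ∈ zLoc P) :
    ∃ (m : ℤ) (d : ℕ), 0 < d ∧ (∀ s : ℕ, s.Prime → s ∣ d → s ∈ P) ∧ x * d = m := by
  induction hx using Subring.closure_induction with
  | mem y hy =>
    obtain ⟨p, hp, rfl⟩ := hy
    have hpp := hP p hp
    refine ⟨1, p, hpp.pos, fun s hs hsd => ?_, ?_⟩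
    · rwa [(Nat.prime_dvd_prime_iff_eq hs hpp).mp hsd]
    · have : (p : ℚ) ≠ 0 := Nat.cast_ne_zero.mpr hpp.pos.ne'
      simp [inv_mul_cancel₀ this]
  | zero => exact ⟨0, 1, one_pos, fun s hs hsd => absurd (Nat.dvd_one.mp hsd) hs.ne_one, by simp⟩
  | one => exact ⟨1, 1, one_pos, fun s hs hsd => absurd (Nat.dvd_one.mp hsd) hs.ne_one, by simp⟩
  | add a b ha hb iha ihb =>
    obtain ⟨m₁, d₁, h₁, hf₁, he₁⟩ := iha
    obtain ⟨m₂, d₂, h₂, hf₂, he₂⟩ := ihb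
    refine ⟨m₁ * d₂ + m₂ * d₁, d₁ * d₂, Nat.mul_pos h₁ h₂, fun s hs hsd => ?_, ?_⟩
    · rcases (Nat.Prime.dvd_mul hs).mp hsd with h | h
      exacts [hf₁ s hs h, hf₂ s hs h]
    · push_cast
      rw [← he₁, ← he₂]; ring
  | neg a ha iha =>
    obtain ⟨m, d, h₁, hf, he⟩ := iha
    exact ⟨-m, d, h₁, hf, by push_cast; rw [← he]; ring⟩
  | mul a b ha hb iha ihb =>
    obtain ⟨m₁, d₁, h₁, hf₁, he₁⟩ := iha
    obtain ⟨m₂, d₂, h₂, hf₂, he₂⟩ := ihb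
    refine ⟨m₁ * m₂, d₁ * d₂, Nat.mul_pos h₁ h₂, fun s hs hsd => ?_, ?_⟩
    · rcases (Nat.Prime.dvd_mul hs).mp hsd with h | h
      exacts [hf₁ s hs h, hf₂ s hs h]
    · push_cast
      rw [← he₁, ← he₂]; ring

lemma sq_of_factors {r : ℕ} [Fact r.Prime] :
    ∀ n : ℕ, (∀ s : ℕ, s.Prime → s ∣ n → IsSquare ((s : ℕ) : ZMod r)) →
      IsSquare ((n : ℕ) : ZMod r) := by
  intro n
  induction n using Nat.strong_induction_on with
  | _ n ih =>
    intro hfac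
    rcases Nat.lt_or_ge n 2 with hn | hn
    · interval_cases n
      · exact ⟨0, by simp⟩
      · exact ⟨1, by simp⟩
    · have hmf : n.minFac.Prime := Nat.minFac_prime (by omega)
      have hdvd : n.minFac ∣ n := Nat.minFac_dvd n
      have h1 : IsSquare ((n.minFac : ℕ) : ZMod r) := hfac _ hmf hdvd
      have h2 : IsSquare (((n / n.minFac) : ℕ) : ZMod r) := by
        refine ih _ (Nat.div_lt_self (by omega) hmf.one_lt) fun s hs hsd => ?_
        exact hfac s hs (hsd.trans (Nat.div_dvd_of_dvd hdvd))
      have : n = n.minFac * (n / n.minFac) := (Nat.mul_div_cancel' hdvd).symm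
      rw [this]
      push_cast
      exact h1.mul h2


/-- If `P` is a finite set of primes, then `ℤ[1/p : p ∈ P]` does not have 1 in the
stable range. -/
theorem not_hasOneInStableRange_of_finite (P : Set ℕ) (hP : ∀ p ∈ P, p.Prime)
    (hfin : P.Finite) :
    ¬ HasOneInStableRange (zLoc P) := by
  classical
  intro hsr
  set N : ℕ := 8 * ∏ p ∈ hfin.toFinset, p with hNdef
  have hN0 : N ≠ 0 := by
    have : ∀ p ∈ hfin.toFinset, p ≠ 0 := fun p hp =>
      (hP p (hfin.mem_toFinset.mp hp)).pos.ne'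
    simp only [hNdef, Ne, mul_eq_zero, Finset.prod_eq_zero_iff]
    push_neg
    exact ⟨by norm_num, fun p hp => this p hp⟩
  obtain ⟨r, hrp, hrgt, hr1⟩ := Nat.exists_prime_gt_modEq_one (k := N) 1 hN0
  haveI : Fact r.Prime := ⟨hrp⟩
  have hdvd8 : 8 ∣ N := ⟨_, rfl⟩
  have hr8 : r % 8 = 1 := by
    have := (hr1.of_dvd hdvd8)
    simpa [Nat.ModEq] using this
  have hr4 : r % 4 = 1 := by omega
  have hrne2 : r ≠ 2 := by omega
  have hmemdvd : ∀ p ∈ P, p ∣ N :=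
    fun p hp => Dvd.dvd.mul_left (Finset.dvd_prod_of_mem id (hfin.mem_toFinset.mpr hp)) 8
  have hrP : r ∉ P := by
    intro hr
    have h2 : r ≡ 1 [MOD r] := hr1.of_dvd (hmemdvd r hr)
    have : r % r = 1 % r := h2
    rw [Nat.mod_self, Nat.mod_eq_of_lt hrp.one_lt] at this
    exact one_ne_zero this.symm
  -- every prime of P is a square mod r
  have hsq : ∀ p ∈ P, IsSquare ((p : ℕ) : ZMod r) := by
    intro p hp
    haveI : Fact p.Prime := ⟨hP p hp⟩
    by_cases hp2 : p = 2
    · subst hp2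
      have := (ZMod.exists_sq_eq_two_iff (p := r) hrne2).mpr (Or.inl hr8)
      simpa using this
    · refine (ZMod.exists_sq_eq_prime_iff_of_mod_four_eq_one (p := r) (q := p) hr4 hp2).mpr ?_
      have : ((r : ℕ) : ZMod p) = ((1 : ℕ) : ZMod p) :=
        (ZMod.natCast_eq_natCast_iff _ _ _).mpr (hr1.of_dvd (hmemdvd p hp))
      rw [this]
      exact ⟨1, by simp⟩
  have hmone : IsSquare (-1 : ZMod r) := ZMod.exists_sq_eq_neg_one_iff.mpr (by omega)
  -- a nonsquare c mod r
  obtain ⟨c, hc⟩ := FiniteField.exists_nonsquare (F := ZMod r)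
    (by rw [ZMod.ringChar_zmod_n]; exact hrne2)
  have hc0 : c ≠ 0 := fun h => hc (h ▸ ⟨0, by simp⟩)
  set q : ℕ := c.val with hqdef
  have hqv : ((q : ℕ) : ZMod r) = c := ZMod.natCast_rightInverse c
  -- q and r are coprime
  have hnd : ¬ r ∣ q := by
    intro hd
    have : ((q : ℕ) : ZMod r) = 0 := (ZMod.natCast_eq_zero_iff _ _).mpr hd
    exact hc0 (by rw [← hqv, this])
  have hcop : Nat.gcd q r = 1 :=
    (Nat.Coprime.symm ((Nat.Prime.coprime_iff_not_dvd hrp).mpr hnd))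
  have hbez : (q : ℤ) * Int.gcdA q r + (r : ℤ) * Int.gcdB q r = 1 := by
    have := Int.gcd_eq_gcd_ab (q : ℤ) (r : ℤ)
    rw [Int.gcd_natCast_natCast, hcop] at this
    exact_mod_cast this.symm
  -- apply stable range 1
  obtain ⟨h, hu⟩ := hsr ((q : ℕ) : zLoc P) ((r : ℕ) : zLoc P)
    ((Int.gcdA q r : ℤ) : zLoc P) ((Int.gcdB q r : ℤ) : zLoc P)
    (by
      apply Subtype.ext
      push_cast
      exact_mod_cast hbez)
  set x : zLoc P := ((q : ℕ) : zLoc P) + ((r : ℕ) : zLoc P) * h with hxdef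
  have hxq : (x : ℚ) = (q : ℚ) + (r : ℚ) * (h : ℚ) := by push_cast [hxdef]; ring
  -- representations
  obtain ⟨m₀, d₀, hd₀pos, hf₀, he₀⟩ := zLoc_rep P hP h.2
  obtain ⟨m₁, d₁, hd₁pos, hf₁, he₁⟩ := zLoc_rep P hP x.2
  set v : zLoc P := ↑hu.unit⁻¹ with hvdef
  obtain ⟨m₂, d₂, hd₂pos, hf₂, he₂⟩ := zLoc_rep P hP v.2
  have hxv : (x : ℚ) * (v : ℚ) = 1 := by
    have : x * v = 1 := hu.mul_val_inv
    exact_mod_cast congrArg (Subtype.val) this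
  -- m₁ * m₂ = d₁ * d₂ in ℤ
  have hmm : m₁ * m₂ = (d₁ : ℤ) * d₂ := by
    have : ((m₁ : ℚ)) * m₂ = ((d₁ : ℚ)) * d₂ := by
      rw [← he₁, ← he₂]
      rw [mul_mul_mul_comm, hxv, one_mul]
    exact_mod_cast this
  -- prime factors of m₁.natAbs are in P
  have hfm₁ : ∀ s : ℕ, s.Prime → s ∣ m₁.natAbs → s ∈ P := by
    intro s hs hsd
    have h2 : (s : ℤ) ∣ ((d₁ * d₂ : ℕ) : ℤ) := by
      push_cast
      calc (s : ℤ) ∣ (m₁.natAbs : ℤ) := Int.natCast_dvd_natCast.mpr hsd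
        _ ∣ m₁ := Int.natAbs_dvd.mpr dvd_rfl
        _ ∣ m₁ * m₂ := dvd_mul_right m₁ m₂
        _ = (d₁ : ℤ) * d₂ := hmm
    have h1 : s ∣ d₁ * d₂ := Int.natCast_dvd_natCast.mp h2
    rcases (Nat.Prime.dvd_mul hs).mp h1 with h | h
    exacts [hf₁ s hs h, hf₂ s hs h]
  -- main integer identity
  have hE : (q : ℤ) * d₀ * d₁ + (r : ℤ) * m₀ * d₁ = m₁ * d₀ := by
    have : ((q : ℚ) * d₀ * d₁ + (r : ℚ) * m₀ * d₁ : ℚ) = (m₁ : ℚ) * d₀ := by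
      rw [← he₀, ← he₁, hxq]; ring
    exact_mod_cast this
  have h0 : ((r : ℕ) : ZMod r) = 0 := ZMod.natCast_self r
  have hE' : (q : ZMod r) * d₀ * d₁ = (m₁ : ZMod r) * d₀ := by
    have := congrArg (fun z : ℤ => (z : ZMod r)) hE
    push_cast [h0] at this
    linear_combination this
  have hd₀ : ((d₀ : ℕ) : ZMod r) ≠ 0 := fun h0 =>
    hrP (hf₀ r hrp ((ZMod.natCast_eq_zero_iff _ _).mp h0))
  have hd₁ : ((d₁ : ℕ) : ZMod r) ≠ 0 := fun h0 =>
    hrP (hf₁ r hrp ((ZMod.natCast_eq_zero_iff _ _).mp h0))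
  have key : c * d₁ = (m₁ : ZMod r) := by
    have := mul_right_cancel₀ hd₀
      (show ((q : ZMod r) * d₁) * d₀ = (m₁ : ZMod r) * d₀ by linear_combination hE')
    rwa [hqv] at this
  have hnat : IsSquare ((m₁.natAbs : ℕ) : ZMod r) :=
    sq_of_factors _ (fun s hs hsd => hsq s (hfm₁ s hs hsd))
  have hsm₁ : IsSquare ((m₁ : ℤ) : ZMod r) := by
    rcases Int.natAbs_eq m₁ with hh | hh
    · rw [hh, Int.cast_natCast]; exact hnat
    · rw [hh, Int.cast_neg, Int.cast_natCast, ← neg_one_mul]; exact hmone.mul hnat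
  obtain ⟨t, ht⟩ := sq_of_factors (r := r) d₁ (fun s hs hsd => hsq s (hf₁ s hs hsd))
  apply hc
  rw [eq_mul_inv_iff_mul_eq₀ hd₁ |>.mpr key]
  refine hsm₁.mul ⟨t⁻¹, ?_⟩
  rw [ht, mul_inv]
end

section
/- Let P be a set of primes such that for every integer m ≥ 2 and every unit c of ℤ/mℤ, there is a finite product of primes from P, each not dividing m, whose image in ℤ/mℤ equals c. Then the subring ℤ[1/p : p ∈ P] of ℚ has 1 in the stable range. -/
section aux

variable {P : Set ℕ}

lemma zLoc.prod_pos (hP : ∀ p ∈ P, p.Prime) {s : Multiset ℕ} (hs : ∀ p ∈ s, p ∈ P) :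
    0 < s.prod := by
  induction s using Multiset.induction with
  | empty => simp
  | cons p s ih =>
    rw [Multiset.prod_cons]
    exact mul_pos (hP p (hs p (Multiset.mem_cons_self _ _))).pos
      (ih fun q hq => hs q (Multiset.mem_cons_of_mem hq))

lemma zLoc.mem_of_dvd_prod (hP : ∀ p ∈ P, p.Prime) {s : Multiset ℕ} (hs : ∀ p ∈ s, p ∈ P)
    {q : ℕ} (hq : q.Prime) (hd : q ∣ s.prod) : q ∈ P := by
  induction s using Multiset.induction with
  | empty => simp at hd; exact absurd hd hq.ne_one
  | cons p s ih =>
    rw [Multiset.prod_cons] at hd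
    have hp : p ∈ P := hs p (Multiset.mem_cons_self _ _)
    rcases (Nat.Prime.dvd_mul hq).mp hd with h1 | h2
    · rwa [(Nat.prime_dvd_prime_iff_eq hq (hP p hp)).mp h1]
    · exact ih (fun r hr => hs r (Multiset.mem_cons_of_mem hr)) h2

lemma zLoc.mem_div (a : ℤ) (s : Multiset ℕ) (hs : ∀ p ∈ s, p ∈ P) :
    ((a : ℚ) / (s.prod : ℕ) : ℚ) ∈ zLoc P := by
  induction s using Multiset.induction with
  | empty => simpa using intCast_mem (zLoc P) a
  | cons p s ih =>
    have hmem : ((p : ℚ))⁻¹ ∈ zLoc P :=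
      Subring.subset_closure ⟨p, hs p (Multiset.mem_cons_self _ _), rfl⟩
    have : ((a : ℚ) / ((p ::ₘ s).prod : ℕ) : ℚ)
        = ((a : ℚ) / (s.prod : ℕ)) * ((p : ℚ))⁻¹ := by
      rw [Multiset.prod_cons]
      push_cast
      rw [div_eq_mul_inv, div_eq_mul_inv, mul_inv]
      ring
    rw [this]
    exact mul_mem (ih fun q hq => hs q (Multiset.mem_cons_of_mem hq)) hmem

lemma zLoc.exists_rep (hP : ∀ p ∈ P, p.Prime) {x : ℚ} (hx : x ∈ zLoc P) :
    ∃ (a : ℤ) (s : Multiset ℕ), (∀ p ∈ s, p ∈ P) ∧ x = (a : ℚ) / (s.prod : ℕ) := by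
  induction hx using Subring.closure_induction with
  | mem x hxs =>
    obtain ⟨p, hp, rfl⟩ := hxs
    exact ⟨1, {p}, by simpa using hp, by simp [one_div]⟩
  | zero => exact ⟨0, 0, by simp, by simp⟩
  | one => exact ⟨1, 0, by simp, by simp⟩
  | add x y hx hy ihx ihy =>
    obtain ⟨a, s, hs, rfl⟩ := ihx
    obtain ⟨b, t, ht, rfl⟩ := ihy
    refine ⟨a * t.prod + b * s.prod, s + t, ?_, ?_⟩
    · intro p hp
      rcases Multiset.mem_add.mp hp with h | h
      · exact hs p h
      · exact ht p h
    · have h0 : ((s.prod : ℕ) : ℚ) ≠ 0 := Nat.cast_ne_zero.mpr (zLoc.prod_pos hP hs).ne'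
      have h1 : ((t.prod : ℕ) : ℚ) ≠ 0 := Nat.cast_ne_zero.mpr (zLoc.prod_pos hP ht).ne'
      rw [Multiset.prod_add, div_add_div _ _ h0 h1]
      generalize s.prod = sp at h0 ⊢
      generalize t.prod = tp at h1 ⊢
      push_cast
      field_simp
  | neg x hx ihx =>
    obtain ⟨a, s, hs, rfl⟩ := ihx
    exact ⟨-a, s, hs, by push_cast; ring⟩
  | mul x y hx hy ihx ihy =>
    obtain ⟨a, s, hs, rfl⟩ := ihx
    obtain ⟨b, t, ht, rfl⟩ := ihy
    refine ⟨a * b, s + t, ?_, ?_⟩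
    · intro p hp
      rcases Multiset.mem_add.mp hp with h | h
      · exact hs p h
      · exact ht p h
    · rw [Multiset.prod_add]
      push_cast
      rw [div_mul_div_comm]

/-- Representation with the denominator abstracted to a natural number. -/
lemma zLoc.exists_rep' (hP : ∀ p ∈ P, p.Prime) {x : ℚ} (hx : x ∈ zLoc P) :
    ∃ (a : ℤ) (n : ℕ), 0 < n ∧ (∀ q : ℕ, q.Prime → q ∣ n → q ∈ P) ∧
      x = (a : ℚ) / (n : ℚ) := by
  obtain ⟨a, s, hs, hx'⟩ := zLoc.exists_rep hP hx
  exact ⟨a, s.prod, zLoc.prod_pos hP hs, fun q hq hd => zLoc.mem_of_dvd_prod hP hs hq hd, hx'⟩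

lemma zLoc.inv_natCast_mem {n : ℕ} (hn0 : n ≠ 0)
    (hnP : ∀ q : ℕ, q.Prime → q ∣ n → q ∈ P) : ((n : ℚ))⁻¹ ∈ zLoc P := by
  have hfac : ∀ p ∈ (↑n.primeFactorsList : Multiset ℕ), p ∈ P := by
    intro p hp
    rw [Multiset.mem_coe] at hp
    exact hnP p (Nat.prime_of_mem_primeFactorsList hp) (Nat.dvd_of_mem_primeFactorsList hp)
  have hprod : ((↑n.primeFactorsList : Multiset ℕ).prod : ℕ) = n := by
    simpa using Nat.prod_primeFactorsList hn0
  have := zLoc.mem_div (P := P) 1 (↑n.primeFactorsList) hfac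
  rw [hprod] at this
  simpa using this

lemma zLoc.inv_intCast_mem {a : ℤ} (ha0 : a ≠ 0)
    (haP : ∀ q : ℕ, q.Prime → (q : ℤ) ∣ a → q ∈ P) : ((a : ℚ))⁻¹ ∈ zLoc P := by
  have hna : a.natAbs ≠ 0 := Int.natAbs_ne_zero.mpr ha0
  have hmem : ((a.natAbs : ℚ))⁻¹ ∈ zLoc P := by
    refine zLoc.inv_natCast_mem hna ?_
    intro q hq hd
    refine haP q hq ?_
    exact (Int.natCast_dvd_natCast.mpr hd).trans (Int.natAbs_dvd.mpr dvd_rfl)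
  rcases Int.natAbs_eq a with h | h
  · rw [h, Int.cast_natCast]; exact hmem
  · rw [h, Int.cast_neg, Int.cast_natCast, inv_neg]; exact neg_mem hmem

lemma zLoc.isUnit_of_val (x : zLoc P) (a : ℤ) (n : ℕ) (hn0 : n ≠ 0) (ha0 : a ≠ 0)
    (haP : ∀ q : ℕ, q.Prime → (q : ℤ) ∣ a → q ∈ P)
    (hx : (x : ℚ) = (a : ℚ) / (n : ℚ)) : IsUnit x := by
  have hn0q : (n : ℚ) ≠ 0 := Nat.cast_ne_zero.mpr hn0
  have ha0q : (a : ℚ) ≠ 0 := Int.cast_ne_zero.mpr ha0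
  have hy : (n : ℚ) * ((a : ℚ))⁻¹ ∈ zLoc P :=
    mul_mem (natCast_mem (zLoc P) n) (zLoc.inv_intCast_mem ha0 haP)
  refine IsUnit.of_mul_eq_one (a := x) ⟨_, hy⟩ (Subtype.ext ?_)
  push_cast
  rw [hx]
  field_simp

end aux

/-- If every unit of `ℤ/mℤ` (for every `m ≥ 2`) is the image of a finite product of
primes from `P` not dividing `m`, then `ℤ[1/p : p ∈ P]` has 1 in the stable range. -/
theorem hasOneInStableRange_of_generates (P : Set ℕ) (hP : ∀ p ∈ P, p.Prime)
    (h : ∀ m : ℕ, 2 ≤ m → ∀ c : (ZMod m)ˣ,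
      ∃ s : Multiset ℕ, (∀ p ∈ s, p ∈ P ∧ ¬ p ∣ m) ∧
        ((s.prod : ℕ) : ZMod m) = (c : ZMod m)) :
    HasOneInStableRange (zLoc P) := by
  intro f₁ f₂ g₁ g₂ hfg
  obtain ⟨a₁, S₁, hS₁pos, hS₁P, e₁⟩ := zLoc.exists_rep' hP f₁.2
  obtain ⟨a₂, S₂, hS₂pos, hS₂P, e₂⟩ := zLoc.exists_rep' hP f₂.2
  obtain ⟨c₁, T₁, hT₁pos, hT₁P, e₃⟩ := zLoc.exists_rep' hP g₁.2
  obtain ⟨c₂, T₂, hT₂pos, hT₂P, e₄⟩ := zLoc.exists_rep' hP g₂.2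
  have hS₁0 : ((S₁ : ℕ) : ℚ) ≠ 0 := Nat.cast_ne_zero.mpr hS₁pos.ne'
  have hS₂0 : ((S₂ : ℕ) : ℚ) ≠ 0 := Nat.cast_ne_zero.mpr hS₂pos.ne'
  have hT₁0 : ((T₁ : ℕ) : ℚ) ≠ 0 := Nat.cast_ne_zero.mpr hT₁pos.ne'
  have hT₂0 : ((T₂ : ℕ) : ℚ) ≠ 0 := Nat.cast_ne_zero.mpr hT₂pos.ne'
  set A : ℤ := a₁ * S₂ with hAdef
  set B : ℤ := a₂ * S₁ with hBdef
  set C : ℤ := c₁ * T₂ with hCdef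
  set E : ℤ := c₂ * T₁ with hEdef
  set D : ℕ := S₁ * S₂ with hDdef
  set T : ℕ := T₁ * T₂ with hTdef
  have hD0 : (D : ℚ) ≠ 0 := by push_cast [hDdef]; exact mul_ne_zero hS₁0 hS₂0
  have hDT_P : ∀ q : ℕ, q.Prime → q ∣ D * T → q ∈ P := by
    intro q hq hd
    rw [hDdef, hTdef] at hd
    rcases (Nat.Prime.dvd_mul hq).mp hd with h' | h'
    · rcases (Nat.Prime.dvd_mul hq).mp h' with h'' | h''
      · exact hS₁P q hq h''
      · exact hS₂P q hq h''
    · rcases (Nat.Prime.dvd_mul hq).mp h' with h'' | h''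
      · exact hT₁P q hq h''
      · exact hT₂P q hq h''
  have hf₁ : (f₁ : ℚ) = (A : ℚ) / (D : ℚ) := by
    rw [e₁, hAdef, hDdef]; push_cast
    rw [mul_div_mul_right _ _ hS₂0]
  have hf₂ : (f₂ : ℚ) = (B : ℚ) / (D : ℚ) := by
    rw [e₂, hBdef, hDdef]; push_cast
    rw [mul_comm (S₁ : ℚ) (S₂ : ℚ), mul_div_mul_right _ _ hS₁0]
  have hrat : (f₁ : ℚ) * (g₁ : ℚ) + (f₂ : ℚ) * (g₂ : ℚ) = 1 := by
    have := congrArg (Subtype.val) hfg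
    push_cast at this
    exact this
  have hZ : A * C + B * E = (D : ℤ) * (T : ℤ) := by
    have hq : (A : ℚ) * (C : ℚ) + (B : ℚ) * (E : ℚ) = (D : ℚ) * (T : ℚ) := by
      rw [e₁, e₂, e₃, e₄] at hrat
      rw [hAdef, hBdef, hCdef, hEdef, hDdef, hTdef]
      push_cast
      field_simp at hrat
      linarith [hrat]
    exact_mod_cast hq
  by_cases hB : B = 0
  · -- then f₂ = 0 and f₁ * g₁ = 1
    have ha₂ : a₂ = 0 := by
      rcases mul_eq_zero.mp hB with h' | h'
      · exact h'
      · exact absurd h' (by exact_mod_cast hS₁pos.ne')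
    have hf₂0 : f₂ = 0 := by
      ext; rw [e₂, ha₂]; simp
    refine ⟨0, ?_⟩
    rw [hf₂0] at hfg ⊢
    rw [zero_mul, add_zero] at hfg
    simpa using IsUnit.of_mul_eq_one (a := f₁) g₁ hfg
  · -- main case
    set g : ℕ := Int.gcd A B with hgdef
    have hg0 : g ≠ 0 := fun hh => hB (Int.gcd_eq_zero_iff.mp hh).2
    have hgpos : 0 < Int.gcd A B := Nat.pos_of_ne_zero hg0
    have hgP : ∀ q : ℕ, q.Prime → q ∣ g → q ∈ P := by
      intro q hq hqg
      have h1 : (g : ℤ) ∣ A * C + B * E :=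
        dvd_add (Dvd.dvd.mul_right (Int.gcd_dvd_left _ _) C) (Dvd.dvd.mul_right (Int.gcd_dvd_right _ _) E)
      rw [hZ] at h1
      have h2 : (q : ℤ) ∣ (D : ℤ) * (T : ℤ) := (Int.natCast_dvd_natCast.mpr hqg).trans h1
      have h3 : q ∣ D * T := by exact_mod_cast h2
      exact hDT_P q hq h3
    set A' : ℤ := A / g with hA'def
    set B' : ℤ := B / g with hB'def
    have hA : (g : ℤ) * A' = A := Int.mul_ediv_cancel' (Int.gcd_dvd_left _ _)
    have hBe : (g : ℤ) * B' = B := Int.mul_ediv_cancel' (Int.gcd_dvd_right _ _)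
    have hcop : Int.gcd A' B' = 1 := Int.gcd_div_gcd_div_gcd hgpos
    have hB'0 : B' ≠ 0 := by
      intro hh; apply hB; rw [← hBe, hh, mul_zero]
    set m : ℕ := B'.natAbs with hmdef
    have hm0 : m ≠ 0 := Int.natAbs_ne_zero.mpr hB'0
    have key : ∃ (s' : Multiset ℕ) (k : ℤ), (∀ p ∈ s', p ∈ P) ∧
        A' + B' * k = ((s'.prod : ℕ) : ℤ) := by
      by_cases hm1 : m = 1
      · rcases Int.natAbs_eq_iff.mp (hmdef ▸ hm1 : B'.natAbs = 1) with h' | h'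
        · refine ⟨0, (1 - A') * B', by simp, ?_⟩
          rw [h']; simp only [Multiset.prod_zero, Nat.cast_one]; ring
        · refine ⟨0, (1 - A') * B', by simp, ?_⟩
          rw [h']; simp only [Multiset.prod_zero, Nat.cast_one]; ring
      · have hm2 : 2 ≤ m := by omega
        have hcop' : Int.gcd A' (m : ℤ) = 1 := by
          rw [hmdef]
          simpa [Int.gcd, Int.natAbs_abs] using hcop
        obtain ⟨u, v, huv⟩ := Int.isCoprime_iff_gcd_eq_one.mpr hcop'
        have hunit : IsUnit ((A' : ℤ) : ZMod m) := by
          refine IsUnit.of_mul_eq_one (a := _) ((u : ℤ) : ZMod m) ?_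
          have := congrArg (fun z : ℤ => (z : ZMod m)) huv
          push_cast [ZMod.natCast_self] at this
          rw [mul_comm]
          simpa using this
        obtain ⟨s', hs'P, hs'c⟩ := h m hm2 hunit.unit
        rw [IsUnit.unit_spec] at hs'c
        have hdvd : (m : ℤ) ∣ ((s'.prod : ℕ) : ℤ) - A' := by
          rw [← ZMod.intCast_zmod_eq_zero_iff_dvd, Int.cast_sub, Int.cast_natCast, hs'c,
            sub_self]
        have hdvd' : B' ∣ ((s'.prod : ℕ) : ℤ) - A' := Int.natAbs_dvd.mp (hmdef ▸ hdvd)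
        obtain ⟨k, hk⟩ := hdvd'
        exact ⟨s', k, fun p hp => (hs'P p hp).1, by linarith [hk]⟩
    obtain ⟨s', k, hs'P, hkey⟩ := key
    set N : ℕ := s'.prod with hNdef
    have hNpos : 0 < N := zLoc.prod_pos hP hs'P
    have hNP : ∀ q : ℕ, q.Prime → q ∣ N → q ∈ P := fun q hq hd =>
      zLoc.mem_of_dvd_prod hP hs'P hq hd
    refine ⟨((k : ℤ) : zLoc P), ?_⟩
    refine zLoc.isUnit_of_val _ ((g : ℤ) * (N : ℤ)) D ?_ ?_ ?_ ?_
    · rw [hDdef]; positivity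
    · exact mul_ne_zero (by exact_mod_cast hg0) (by exact_mod_cast hNpos.ne')
    · intro q hq hqd
      have : q ∣ g * N := by exact_mod_cast hqd
      rcases (Nat.Prime.dvd_mul hq).mp this with h' | h'
      · exact hgP q hq h'
      · exact hNP q hq h'
    · have hnum : A + B * k = (g : ℤ) * (N : ℤ) := by
        rw [← hA, ← hBe]
        calc (g : ℤ) * A' + (g : ℤ) * B' * k = (g : ℤ) * (A' + B' * k) := by ring
          _ = (g : ℤ) * (N : ℤ) := by rw [hkey]
      push_cast
      rw [hf₁, hf₂]
      rw [div_mul_eq_mul_div, ← add_div]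
      congr 1
      exact_mod_cast congrArg (Int.cast : ℤ → ℚ) hnum
end

section
/- Let G be a torsion-free abelian group such that the endomorphism ring of G has 1 in the stable range. Then G is cancellable: for all abelian groups H and K, if G ⊕ H ≅ G ⊕ K then H ≅ K. -/
/-- An abelian group `A` is cancellable if for all abelian groups `G` and `H`,
`A ⊕ G ≅ A ⊕ H` implies `G ≅ H`. -/
def Cancellable (A : Type) [AddCommGroup A] : Prop :=
  ∀ (G H : Type) [AddCommGroup G] [AddCommGroup H],
    Nonempty ((A × G) ≃+ (A × H)) → Nonempty (G ≃+ H)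

/-- A torsion-free abelian group whose endomorphism ring has 1 in the stable range
is cancellable. -/
theorem cancellable_of_stableRange (G : Type) [AddCommGroup G]
    (htf : ∀ (n : ℤ) (g : G), n ≠ 0 → n • g = 0 → g = 0)
    (hsr : HasOneInStableRange (AddMonoid.End G)) :
    Cancellable G := by
  intro H K _ _ hne
  obtain ⟨ψ⟩ := hne
  let p : G × H →+ G := (AddMonoidHom.fst G K).comp ψ.toAddMonoidHom
  let f₁ : G →+ G := p.comp (AddMonoidHom.inl G H)
  let f₂ : H →+ G := p.comp (AddMonoidHom.inr G H)
  let s : G →+ G × H := ψ.symm.toAddMonoidHom.comp (AddMonoidHom.inl G K)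
  let g₁ : G →+ G := (AddMonoidHom.fst G H).comp s
  let g₂ : G →+ H := (AddMonoidHom.snd G H).comp s
  have hps : ∀ x : G × H, p x = f₁ x.1 + f₂ x.2 := by
    intro x
    have hx : x = (x.1, (0:H)) + ((0:G), x.2) := by ext <;> simp
    rw [show p x = p ((x.1, (0:H)) + ((0:G), x.2)) from by rw [← hx], map_add]
    rfl
  let F₁ : AddMonoid.End G := f₁
  let F₂ : AddMonoid.End G := f₂.comp g₂
  let G₁ : AddMonoid.End G := g₁
  have key : F₁ * G₁ + F₂ * 1 = 1 := by
    refine AddMonoidHom.ext fun g => ?_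
    show f₁ (g₁ g) + f₂ (g₂ g) = g
    rw [show f₁ (g₁ g) + f₂ (g₂ g) = p (s g) from (hps (s g)).symm]
    show (ψ (ψ.symm (g, 0))).1 = g
    simp
  obtain ⟨h, hu⟩ := hsr F₁ F₂ G₁ 1 key
  obtain ⟨U, hU⟩ := hu
  let uu : G →+ G := (↑U : AddMonoid.End G)
  let v : G →+ G := (↑U⁻¹ : AddMonoid.End G)
  have huapp : ∀ x, uu x = f₁ x + f₂ (g₂ (h x)) := by
    intro x
    show (↑U : AddMonoid.End G) x = _
    rw [hU]; rfl
    
  have hvu : ∀ x, v (uu x) = x := by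
    intro x
    show (↑U⁻¹ * ↑U : AddMonoid.End G) x = x
    rw [U.inv_mul]; rfl
  have huv : ∀ x, uu (v x) = x := by
    intro x
    show (↑U * ↑U⁻¹ : AddMonoid.End G) x = x
    rw [U.mul_inv]; rfl
  let k : G →+ H := g₂.comp (h : G →+ G)
  let m0 : H →+ G := -(v.comp f₂)
  have hkey : ∀ (a : G) (b : H), p (a, b + k a) = uu a + f₂ b := by
    intro a b
    rw [hps, map_add, huapp]
    show f₁ a + (f₂ b + f₂ (g₂ (h a))) = f₁ a + f₂ (g₂ (h a)) + f₂ b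
    abel
  let j : H →+ G × H := m0.prod (AddMonoidHom.id H + k.comp m0)
  let Φ : H →+ K := (AddMonoidHom.snd G K).comp (ψ.toAddMonoidHom.comp j)
  let Ψ : K → H := fun c => (ψ.symm (0, c)).2 - k ((ψ.symm (0, c)).1)
  have hj : ∀ n : H, j n = (m0 n, n + k (m0 n)) := fun n => rfl
  have hli : ∀ n : H, Ψ (Φ n) = n := by
    intro n
    have hpx : p (j n) = 0 := by
      rw [hj, hkey]
      show uu (-(v (f₂ n))) + f₂ n = 0
      rw [map_neg, huv]
      abel
    have hψx : ψ (j n) = (0, Φ n) := by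
      ext
      · exact hpx
      · rfl
    show (ψ.symm (0, Φ n)).2 - k ((ψ.symm (0, Φ n)).1) = n
    rw [← hψx, ψ.symm_apply_apply, hj]
    simp
  have hri : ∀ c : K, Φ (Ψ c) = c := by
    intro c
    set y := ψ.symm (0, c) with hy
    have hψy : ψ y = (0, c) := ψ.apply_symm_apply _
    have hpy : p y = 0 := by
      show (ψ y).1 = 0
      rw [hψy]
    set n : H := y.2 - k y.1 with hn
    have h1 : y.2 = n + k y.1 := by rw [hn]; abel
    have h2 : uu y.1 + f₂ n = 0 := by
      rw [← hkey, ← h1]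
      rw [show (y.1, y.2) = y from rfl]
      exact hpy
    have h3 : y.1 = m0 n := by
      have : uu y.1 = -(f₂ n) := by rw [eq_neg_iff_add_eq_zero]; exact h2
      show y.1 = -(v (f₂ n))
      rw [← hvu y.1, this, map_neg]
    have h4 : j n = y := by
      rw [hj, ← h3, ← h1]
    show (ψ (j n)).2 = c
    rw [h4, hψy]
  exact ⟨⟨⟨Φ, Ψ, hli, hri⟩, Φ.map_add⟩⟩
end

section
/- Let A be a finitely generated abelian group. Then A is cancellable: for all abelian groups G and H, if A ⊕ G ≅ A ⊕ H then G ≅ H. -/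
section Gadgets

variable {P A G H : Type} [AddCommGroup P] [AddCommGroup A] [AddCommGroup G] [AddCommGroup H]

/-- The kernel of "first coordinate after an equivalence" is the second factor. -/
noncomputable def kerEquiv (e : P ≃+ A × G) (f : P →+ A) (hf : ∀ p, f p = (e p).1) :
    f.ker ≃+ G := by
  refine AddEquiv.ofBijective
    ((AddMonoidHom.snd A G).comp (e.toAddMonoidHom.comp f.ker.subtype)) ⟨?_, ?_⟩
  · intro x y hxy
    apply Subtype.ext
    apply e.injective
    have hx : f x.1 = 0 := x.2
    have hy : f y.1 = 0 := y.2
    rw [hf] at hx hy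
    exact Prod.ext (hx.trans hy.symm) hxy
  · intro g
    have hm : f (e.symm (0, g)) = 0 := by rw [hf, e.apply_symm_apply]
    exact ⟨⟨e.symm (0, g), hm⟩, by simp⟩

theorem equiv_of_theta (ψ : A × G ≃+ A × H) (Θ : A × G ≃+ A × G)
    (hΘ : ∀ p, (Θ p).1 = (ψ p).1) : Nonempty (G ≃+ H) := by
  set f : A × G →+ A := (AddMonoidHom.fst A H).comp ψ.toAddMonoidHom with hfdef
  have h1 : f.ker ≃+ H := kerEquiv ψ f (fun p => rfl)
  have h2 : f.ker ≃+ G := kerEquiv Θ f (fun p => (hΘ p).symm)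
  exact ⟨h2.symm.trans h1⟩

theorem fg_decomp (f : A × G →+ A) (p : A × G) :
    f p = f.comp (AddMonoidHom.inl A G) p.1 + f.comp (AddMonoidHom.inr A G) p.2 := by
  have h : ((p.1 : A), (0 : G)) + ((0 : A), p.2) = p := by simp
  calc f p = f ((p.1, 0) + (0, p.2)) := by rw [h]
    _ = _ := by rw [map_add]; rfl

end Gadgets

section Closure

variable {A B G H : Type} [AddCommGroup A] [AddCommGroup B]

theorem cancellable_congr (e : A ≃+ B) (hA : Cancellable A) : Cancellable B := by
  intro G H _ _ ⟨ψ⟩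
  exact hA G H ⟨(AddEquiv.prodCongr e (AddEquiv.refl G)).trans
    (ψ.trans (AddEquiv.prodCongr e.symm (AddEquiv.refl H)))⟩

theorem cancellable_prod (hA : Cancellable A) (hB : Cancellable B) : Cancellable (A × B) := by
  intro G H _ _ ⟨ψ⟩
  refine hB G H (hA (B × G) (B × H) ⟨?_⟩)
  exact (AddEquiv.prodAssoc (M := A) (N := B) (P := G)).symm.trans
    (ψ.trans (AddEquiv.prodAssoc (M := A) (N := B) (P := H)))

theorem cancellable_subsingleton (A : Type) [AddCommGroup A] [Subsingleton A] :
    Cancellable A := by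
  intro G H _ _ ⟨ψ⟩
  have eG : G ≃+ A × G :=
    { toFun := fun g => (0, g)
      invFun := fun p => p.2
      left_inv := fun g => rfl
      right_inv := fun p => Prod.ext (Subsingleton.elim _ _) rfl
      map_add' := fun g g' => by simp }
  have eH : A × H ≃+ H :=
    { toFun := fun p => p.2
      invFun := fun h => (0, h)
      left_inv := fun p => Prod.ext (Subsingleton.elim _ _) rfl
      right_inv := fun h => rfl
      map_add' := fun p q => rfl }
  exact ⟨eG.trans (ψ.trans eH)⟩

theorem cancellable_pi_fin : ∀ (n : ℕ) (M : Fin n → Type) (_ : ∀ i, AddCommGroup (M i)),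
    (∀ i, Cancellable (M i)) → Cancellable (∀ i, M i) := by
  intro n
  induction n with
  | zero =>
    intro M instM _
    exact cancellable_subsingleton _
  | succ n ih =>
    intro M instM hM
    have hadd : ∀ p q : M 0 × (∀ i : Fin n, M i.succ),
        (Fin.consEquiv M) (p + q) = (Fin.consEquiv M) p + (Fin.consEquiv M) q := by
      intro p q
      funext i
      refine Fin.cases ?_ ?_ i <;> simp [Fin.consEquiv]
    have e : M 0 × (∀ i : Fin n, M i.succ) ≃+ (∀ i, M i) :=
      { Fin.consEquiv M with map_add' := hadd }
    refine cancellable_congr e ?_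
    exact cancellable_prod (hM 0) (ih (fun i => M i.succ) (fun i => inferInstance)
      (fun i => hM i.succ))

/-- Reindexing a dependent product of groups along an equivalence of index types. -/
def addPiCongrLeft' {ι κ : Type} (M : ι → Type) [∀ i, AddCommGroup (M i)] (e : ι ≃ κ) :
    (∀ i, M i) ≃+ (∀ k, M (e.symm k)) :=
  { Equiv.piCongrLeft' M e with map_add' := fun f g => rfl }

end Closure

section IntCase
variable {G H : Type} [AddCommGroup G] [AddCommGroup H]

noncomputable def splitG (φ : G →+ ℤ) (m : ℤ) (hm : m ≠ 0) (hdvd : ∀ g, m ∣ φ g)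
    (g₀ : G) (hg₀ : φ g₀ = m) : G ≃+ ℤ × φ.ker := by
  have ρ_add : ∀ g g', φ (g + g') / m = φ g / m + φ g' / m := by
    intro g g'
    obtain ⟨k, hk⟩ := hdvd g; obtain ⟨k', hk'⟩ := hdvd g'
    rw [map_add, hk, hk', ← mul_add, Int.mul_ediv_cancel_left _ hm,
      Int.mul_ediv_cancel_left _ hm, Int.mul_ediv_cancel_left _ hm]
  set ρ : G →+ ℤ := AddMonoidHom.mk' (fun g => φ g / m) ρ_add with hρ
  have hval : ∀ g, ρ g = φ g / m := fun _ => rfl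
  have hρ0 : ρ g₀ = 1 := by rw [hval, hg₀, Int.ediv_self hm]
  have hρk : ∀ k : G, φ k = 0 → ρ k = 0 := by
    intro k hk; rw [hval, hk, Int.zero_ediv]
  have hmem : ∀ g, g - ρ g • g₀ ∈ φ.ker := by
    intro g
    have : φ (g - ρ g • g₀) = φ g - ρ g * m := by
      rw [map_sub, map_zsmul, hg₀, smul_eq_mul]
    rw [AddMonoidHom.mem_ker, this, hval, Int.ediv_mul_cancel (hdvd g), sub_self]
  refine
    { toFun := fun g => (ρ g, ⟨g - ρ g • g₀, hmem g⟩)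
      invFun := fun p => p.1 • g₀ + p.2.1
      left_inv := ?_
      right_inv := ?_
      map_add' := ?_ }
  · intro g; simp
  · rintro ⟨n, k, hk⟩
    have hk' : φ k = 0 := hk
    refine Prod.ext ?_ (Subtype.ext ?_) <;>
      simp [map_zsmul, hρ0, hρk k hk', smul_eq_mul]
  · intro g g'
    refine Prod.ext (map_add ρ g g') (Subtype.ext ?_)
    show g + g' - ρ (g + g') • g₀ = (g - ρ g • g₀) + (g' - ρ g' • g₀)
    rw [map_add, add_smul]
    abel

-- f decomposition on ℤ × G
theorem f_decomp (f : ℤ × G →+ ℤ) (p : ℤ × G) :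
    f p = p.1 * f (1, 0) + f.comp (AddMonoidHom.inr ℤ G) p.2 := by
  have h : p.1 • ((1 : ℤ), (0 : G)) + ((0 : ℤ), p.2) = p := by
    simp [Prod.ext_iff]
  calc f p = f (p.1 • ((1 : ℤ), (0 : G)) + ((0 : ℤ), p.2)) := by rw [h]
    _ = p.1 * f (1, 0) + f (0, p.2) := by rw [map_add, map_zsmul, smul_eq_mul]
    _ = _ := rfl

theorem int_cancellable' (ψ : ℤ × G ≃+ ℤ × H) : Nonempty (G ≃+ H) := by
  set f : ℤ × G →+ ℤ := (AddMonoidHom.fst ℤ H).comp ψ.toAddMonoidHom with hfdef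
  have hsurj : Function.Surjective f :=
    (Prod.fst_surjective).comp ψ.surjective
  set a : ℤ := f (1, 0) with ha
  set φ : G →+ ℤ := f.comp (AddMonoidHom.inr ℤ G) with hφ
  have hfp : ∀ p : ℤ × G, f p = p.1 * a + φ p.2 := f_decomp f
  obtain ⟨m, hmr⟩ := Int.subgroup_cyclic φ.range
  have hdvd : ∀ g, m ∣ φ g := by
    intro g
    have : φ g ∈ φ.range := ⟨g, rfl⟩
    rw [hmr, AddSubgroup.mem_closure_singleton] at this
    obtain ⟨n, hn⟩ := this
    exact ⟨n, by rw [← hn, smul_eq_mul, mul_comm]⟩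
  obtain ⟨q, hq1⟩ := hsurj 1
  by_cases hm : m = 0
  · -- φ = 0, a is a unit
    have hφ0 : ∀ g, φ g = 0 := by
      intro g
      obtain ⟨n, hn⟩ := hdvd g
      rw [hn, hm, zero_mul]
    have haq : q.1 * a = 1 := by
      have := hfp q; rw [hq1, hφ0] at this; linarith
    have haa : a * a = 1 := by
      rcases Int.isUnit_iff.mp
        (IsUnit.of_mul_eq_one (a := a) q.1 (by linarith [mul_comm q.1 a])) with h | h <;>
        rw [h] <;> ring
    refine equiv_of_theta ψ (AddEquiv.prodCongr
      { toFun := fun x => a * x, invFun := fun x => a * x,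
        left_inv := fun x => by show a * (a * x) = x; rw [← mul_assoc, haa, one_mul],
        right_inv := fun x => by show a * (a * x) = x; rw [← mul_assoc, haa, one_mul],
        map_add' := mul_add a } (AddEquiv.refl G)) ?_
    intro p
    show a * p.1 = (ψ p).1
    have h2 : f p = (ψ p).1 := rfl
    have h := hfp p
    rw [hφ0 p.2, add_zero] at h
    rw [← h2, h, mul_comm]
  · -- m ≠ 0
    have hg₀ : ∃ g₀, φ g₀ = m := by
      have : m ∈ φ.range := by
        rw [hmr]
        exact AddSubgroup.mem_closure_singleton.mpr ⟨1, one_smul _ _⟩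
      exact this
    obtain ⟨g₀, hg₀⟩ := hg₀
    set K := φ.ker
    set eG : G ≃+ ℤ × K := splitG φ m hm hdvd g₀ hg₀ with heG
    obtain ⟨w, hw⟩ := hdvd q.2
    have hrel : a * q.1 + m * w = 1 := by
      have := hfp q; rw [hq1, hw] at this; linarith
    set T : ℤ × ℤ ≃+ ℤ × ℤ :=
      { toFun := fun x => (a * x.1 + m * x.2, -w * x.1 + q.1 * x.2)
        invFun := fun x => (q.1 * x.1 - m * x.2, w * x.1 + a * x.2)
        left_inv := by
          intro x
          refine Prod.ext ?_ ?_ <;> simp only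
          · linear_combination x.1 * hrel
          · linear_combination x.2 * hrel
        right_inv := by
          intro x
          refine Prod.ext ?_ ?_ <;> simp only
          · linear_combination x.1 * hrel
          · linear_combination x.2 * hrel
        map_add' := by
          intro x y
          refine Prod.ext ?_ ?_ <;>
            simp only [Prod.fst_add, Prod.snd_add] <;> ring } with hT
    set Θ : ℤ × G ≃+ ℤ × G :=
      (AddEquiv.prodCongr (AddEquiv.refl ℤ) eG).trans
        (((AddEquiv.prodAssoc (M := ℤ) (N := ℤ) (P := K)).symm).trans
          ((AddEquiv.prodCongr T (AddEquiv.refl K)).trans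
            ((AddEquiv.prodAssoc (M := ℤ) (N := ℤ) (P := K)).trans
              (AddEquiv.prodCongr (AddEquiv.refl ℤ) eG.symm)))) with hΘdef
    refine equiv_of_theta ψ Θ ?_
    intro p
    show a * p.1 + m * (φ p.2 / m) = (ψ p).1
    rw [Int.mul_ediv_cancel' (hdvd p.2)]
    have h2 : f p = (ψ p).1 := rfl
    rw [← h2, hfp p, mul_comm]

theorem int_cancellable : Cancellable ℤ := by
  intro G H _ _ ⟨ψ⟩
  exact int_cancellable' ψ

end IntCase

section Evans
theorem sr_cancellable (A : Type) [AddCommGroup A]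
    (hSR : ∀ a b : AddMonoid.End A, (∃ c, a * c + b = 1) → ∃ t, IsUnit (a + b * t)) :
    Cancellable A := by
  intro G H _ _ ⟨ψ⟩
  set f : A × G →+ A := (AddMonoidHom.fst A H).comp ψ.toAddMonoidHom with hfdef
  set s : A →+ A × G := ψ.symm.toAddMonoidHom.comp (AddMonoidHom.inl A H) with hsdef
  have hfs : ∀ x, f (s x) = x := by
    intro x
    show (ψ (ψ.symm (x, 0))).1 = x
    rw [AddEquiv.apply_symm_apply]
  set α : AddMonoid.End A := f.comp (AddMonoidHom.inl A G) with hα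
  set β : G →+ A := f.comp (AddMonoidHom.inr A G) with hβ
  set α' : AddMonoid.End A := (AddMonoidHom.fst A G).comp s with hα'
  set β' : A →+ G := (AddMonoidHom.snd A G).comp s with hβ'
  have hfp : ∀ p : A × G, f p = α p.1 + β p.2 := fg_decomp f
  set b : AddMonoid.End A := AddMonoidHom.comp β β' with hb
  have hid : α * α' + b = 1 := by
    refine AddMonoidHom.ext fun x => ?_
    show α (α' x) + β (β' x) = x
    have h1 : α (α' x) = f ((s x).1, 0) := rfl
    have h2 : β (β' x) = f (0, (s x).2) := rfl
    rw [h1, h2, ← map_add]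
    simpa using hfs x
  obtain ⟨t, hu⟩ := hSR α b ⟨α', hid⟩
  set u : AddMonoid.End A := α + b * t with hudef
  set δ : A →+ G := β'.comp (t : A →+ A) with hδ
  have hux : ∀ x, u x = α x + β (δ x) := fun x => rfl
  set w : AddMonoid.End A := ↑hu.unit⁻¹ with hw
  have husp : (hu.unit : AddMonoid.End A) = u := hu.unit_spec
  have hw1 : ∀ x, u (w x) = x := by
    intro x
    have h1 : u * w = 1 := hu.mul_val_inv
    exact congrArg (fun e : AddMonoid.End A => e x) h1
  have hw2 : ∀ x, w (u x) = x := by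
    intro x
    have h1 : w * u = 1 := hu.val_inv_mul
    exact congrArg (fun e : AddMonoid.End A => e x) h1
  set θs : A × G ≃+ A × G :=
    { toFun := fun p => (p.1, p.2 - δ p.1)
      invFun := fun p => (p.1, p.2 + δ p.1)
      left_inv := fun p => by simp
      right_inv := fun p => by simp
      map_add' := fun p q => by
        refine Prod.ext rfl ?_
        show p.2 + q.2 - δ (p.1 + q.1) = p.2 - δ p.1 + (q.2 - δ q.1)
        rw [map_add]; abel } with hθs
  set Θ' : A × G ≃+ A × G :=
    { toFun := fun p => (u p.1 + β p.2, p.2)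
      invFun := fun p => (w (p.1 - β p.2), p.2)
      left_inv := fun p => by
        refine Prod.ext ?_ rfl
        show w (u p.1 + β p.2 - β p.2) = p.1
        rw [add_sub_cancel_right, hw2]
      right_inv := fun p => by
        refine Prod.ext ?_ rfl
        show u (w (p.1 - β p.2)) + β p.2 = p.1
        rw [hw1, sub_add_cancel]
      map_add' := fun p q => by
        refine Prod.ext ?_ rfl
        show u (p.1 + q.1) + β (p.2 + q.2) = u p.1 + β p.2 + (u q.1 + β q.2)
        rw [map_add, map_add]; abel } with hΘ'
  refine equiv_of_theta ψ (θs.trans Θ') ?_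
  intro p
  show u p.1 + β (p.2 - δ p.1) = (ψ p).1
  have h2 : f p = (ψ p).1 := rfl
  rw [map_sub, hux, ← h2, hfp p]
  abel

end Evans

section ZModCase

theorem endZMod (n : ℕ) [NeZero n] (f : AddMonoid.End (ZMod n)) (x : ZMod n) :
    f x = x * f 1 := by
  have hx : ((x.val : ℕ) : ZMod n) = x := ZMod.natCast_rightInverse x
  calc f x = f (x.val • (1 : ZMod n)) := by rw [nsmul_eq_mul, mul_one, hx]
    _ = x.val • f 1 := map_nsmul f x.val 1
    _ = (x.val : ZMod n) * f 1 := nsmul_eq_mul _ _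
    _ = x * f 1 := by rw [hx]

theorem unit_of_unit_one (n : ℕ) [NeZero n] (f : AddMonoid.End (ZMod n))
    (h : IsUnit (f 1)) : IsUnit f := by
  set g : AddMonoid.End (ZMod n) := AddMonoidHom.mulLeft (↑h.unit⁻¹ : ZMod n) with hg
  have hgx : ∀ x, g x = (↑h.unit⁻¹ : ZMod n) * x := fun x => rfl
  have h1 : (↑h.unit⁻¹ : ZMod n) * f 1 = 1 := h.val_inv_mul
  refine isUnit_iff_exists.mpr ⟨g, ?_, ?_⟩
  · refine AddMonoidHom.ext fun x => ?_
    show f (g x) = x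
    rw [hgx, endZMod n f, mul_comm (↑h.unit⁻¹ : ZMod n) x, mul_assoc, h1, mul_one]
  · refine AddMonoidHom.ext fun x => ?_
    show g (f x) = x
    rw [endZMod n f, hgx, mul_comm x (f 1), ← mul_assoc, h1, one_mul]

theorem zmod_dichotomy (p e : ℕ) (hp : p.Prime) (he : e ≠ 0) (x : ZMod (p ^ e)) :
    IsUnit x ∨ IsUnit (1 - x) := by
  have hlt : 1 < p ^ e := Nat.one_lt_pow he hp.one_lt
  haveI : NeZero (p ^ e) := ⟨by omega⟩
  haveI : Fact (1 < p ^ e) := ⟨hlt⟩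
  have hiu : ∀ y : ZMod (p ^ e), ¬ IsUnit y → p ∣ y.val := by
    intro y hy
    by_contra hpd
    apply hy
    have hy' : ((y.val : ℕ) : ZMod (p ^ e)) = y := ZMod.natCast_rightInverse y
    rw [← hy']
    rw [ZMod.isUnit_iff_coprime]
    exact Nat.Coprime.pow_right _ ((hp.coprime_iff_not_dvd.mpr hpd).symm)
  by_contra hcon
  push_neg at hcon
  obtain ⟨h1, h2⟩ := hcon
  have d1 := hiu x h1
  have d2 := hiu (1 - x) h2
  have hsum : (x + (1 - x)).val = (x.val + (1 - x).val) % (p ^ e) := ZMod.val_add _ _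
  have hx1 : (x + (1 - x)) = (1 : ZMod (p ^ e)) := by ring
  rw [hx1, ZMod.val_one _] at hsum
  have hdvd : p ∣ (x.val + (1 - x).val) % (p ^ e) :=
    (Nat.dvd_mod_iff (dvd_pow_self p he)).mpr (Nat.dvd_add d1 d2)
  rw [← hsum] at hdvd
  exact hp.one_lt.ne' (Nat.dvd_one.mp hdvd)

theorem zmod_sr (p e : ℕ) (hp : p.Prime) (he : e ≠ 0) :
    ∀ a b : AddMonoid.End (ZMod (p ^ e)), (∃ c, a * c + b = 1) → ∃ t, IsUnit (a + b * t) := by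
  have hlt : 1 < p ^ e := Nat.one_lt_pow he hp.one_lt
  haveI : NeZero (p ^ e) := ⟨by omega⟩
  intro a b ⟨c, hc⟩
  by_cases ha : IsUnit (a 1)
  · exact ⟨0, by rw [mul_zero, add_zero]; exact unit_of_unit_one _ a ha⟩
  · have hone : a (c 1) + b 1 = 1 := congrArg (fun e : AddMonoid.End (ZMod (p ^ e)) => e 1) hc
    rw [endZMod _ a (c 1)] at hone
    have hnu : ¬ IsUnit (c 1 * a 1) := fun h => ha (isUnit_of_mul_isUnit_right h)
    have hbu : IsUnit (b 1) := by
      rcases zmod_dichotomy p e hp he (c 1 * a 1) with h | h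
      · exact absurd h hnu
      · have : b 1 = 1 - c 1 * a 1 := by linear_combination hone
        rw [this]; exact h
    set r : ZMod (p ^ e) := (↑hbu.unit⁻¹ : ZMod (p ^ e)) * (1 - a 1) with hr
    set t : AddMonoid.End (ZMod (p ^ e)) := AddMonoidHom.mulLeft r with htdef
    refine ⟨t, ?_⟩
    apply unit_of_unit_one
    have ht1 : t 1 = r := mul_one r
    have happ : (a + b * t) 1 = a 1 + b r := by
      show a 1 + b (t 1) = a 1 + b r
      rw [ht1]
    rw [happ, endZMod _ b r, hr]
    have hinv : (↑hbu.unit⁻¹ : ZMod (p ^ e)) * b 1 = 1 := hbu.val_inv_mul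
    have : a 1 + (↑hbu.unit⁻¹ : ZMod (p ^ e)) * (1 - a 1) * b 1 = 1 := by
      calc a 1 + (↑hbu.unit⁻¹ : ZMod (p ^ e)) * (1 - a 1) * b 1
          = a 1 + (1 - a 1) * ((↑hbu.unit⁻¹ : ZMod (p ^ e)) * b 1) := by ring
        _ = 1 := by rw [hinv, mul_one]; ring
    rw [this]
    exact isUnit_one

end ZModCase

theorem cancellable_zmod_pp (p e : ℕ) (hp : p.Prime) : Cancellable (ZMod (p ^ e)) := by
  rcases Nat.eq_zero_or_pos e with he | he
  · subst he
    have : Subsingleton (ZMod (p ^ 0)) := by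
      rw [pow_zero]
      infer_instance
    exact cancellable_subsingleton _
  · exact sr_cancellable _ (zmod_sr p e hp (by omega))

/-- Walker, Cohn: every finitely generated abelian group is cancellable. -/
theorem cancellable_of_fg (A : Type) [AddCommGroup A] (hfg : AddGroup.FG A) :
    Cancellable A := by
  obtain ⟨n, ι, fι, p, hp, e, ⟨fA⟩⟩ := AddCommGroup.equiv_free_prod_directSum_zmod A
  refine cancellable_congr fA.symm ?_
  refine cancellable_prod ?_ ?_
  · refine cancellable_congr (Finsupp.addEquivFunOnFinite (ι := Fin n) (M := ℤ)).symm ?_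
    exact cancellable_pi_fin n (fun _ => ℤ) (fun _ => inferInstance) (fun _ => int_cancellable)
  · refine cancellable_congr (DirectSum.addEquivProd (fun i : ι => ZMod (p i ^ e i))).symm ?_
    haveI := fι
    set eι : ι ≃ Fin (Fintype.card ι) := Fintype.equivFin ι with heι
    refine cancellable_congr (addPiCongrLeft' (fun i => ZMod (p i ^ e i)) eι).symm ?_
    exact cancellable_pi_fin _ (fun k => ZMod (p (eι.symm k) ^ e (eι.symm k)))
      (fun _ => inferInstance) (fun k => cancellable_zmod_pp _ _ (hp _))
end
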